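/- arXiv:2511.08385 — 8 statements merged into one kernel-verified Lean document; each statement's English description precedes it below -/
import Mathlib

section
/- For every degree d ≥ 2, diameter D ≥ 1, and every k with 1 ≤ k ≤ D, the following identity holds in the Kautz digraphs: σ_{k+1}(d, D+1) = d² · σ_k(d, D) − ρ_k(d, D). That is, the number of ordered pairs of vertices at directed distance exactly k+1 in K(d, D+1) equals d² times the number of ordered pairs at directed distance exactly k in K(d, D), minus the number of edges of K(d, D) whose shortest directed cycle has length k+1. -/
/-- A Kautz word: a sequence with no two consecutive letters equal. -/
def IsKautzWord (d n : ℕ) (w : Fin n → Fin (d + 1)) : Prop :=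
  ∀ (i : ℕ) (h : i + 1 < n), w ⟨i, Nat.lt_of_succ_lt h⟩ ≠ w ⟨i + 1, h⟩

/-- Vertices of the Kautz digraph `K(d, D)`: Kautz words of length `D+1`. -/
def KautzVertex (d D : ℕ) : Type :=
  { w : Fin (D + 1) → Fin (d + 1) // IsKautzWord d (D + 1) w }

/-- Adjacency in `K(d, D)`: `v` is obtained from `u` by a left shift and
appending a new last letter (automatically distinct since `v` is a Kautz word). -/
def KautzAdj (d D : ℕ) (u v : KautzVertex d D) : Prop :=
  ∀ i : Fin D, v.1 i.castSucc = u.1 i.succ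

/-- A directed walk of length `m` from `u` to `v` exists. -/
def HasWalk {V : Type*} (Adj : V → V → Prop) : ℕ → V → V → Prop
  | 0, u, v => u = v
  | m + 1, u, v => ∃ w, Adj u w ∧ HasWalk Adj m w v

/-- Directed distance: minimum length of a directed walk. -/
noncomputable def ddist {V : Type*} (Adj : V → V → Prop) (u v : V) : ℕ :=
  sInf {m | HasWalk Adj m u v}

/-- A directed cycle of length `L` through the arc `u → v`: a closed walk of
length `L` with pairwise distinct vertices traversing the arc `u → v`. -/
def IsCycleThroughEdge {V : Type*} (Adj : V → V → Prop) (u v : V) (L : ℕ) : Prop :=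
  0 < L ∧ ∃ c : ZMod L → V, Function.Injective c ∧
    (∀ i, Adj (c i) (c (i + 1))) ∧ c 0 = u ∧ c 1 = v

/-- Length of the shortest directed cycle through the arc `u → v`. -/
noncomputable def cycleLen {V : Type*} (Adj : V → V → Prop) (u v : V) : ℕ :=
  sInf {L | IsCycleThroughEdge Adj u v L}

/-- `ρ_k(d, D)`: number of edges of `K(d, D)` whose shortest cycle has length `k+1`. -/
noncomputable def rho (d D k : ℕ) : ℕ :=
  Nat.card {p : KautzVertex d D × KautzVertex d D //
    KautzAdj d D p.1 p.2 ∧ cycleLen (KautzAdj d D) p.1 p.2 = k + 1}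

/-- `σ_k(d, D)`: number of ordered pairs of distinct vertices at distance exactly `k`. -/
noncomputable def sigma (d D k : ℕ) : ℕ :=
  Nat.card {p : KautzVertex d D × KautzVertex d D //
    p.1 ≠ p.2 ∧ ddist (KautzAdj d D) p.1 p.2 = k}

/-! ### General walk and cycle lemmas -/

lemma hasWalk_zero {V : Type*} {A : V → V → Prop} {u v : V} : HasWalk A 0 u v ↔ u = v := Iff.rfl

lemma hasWalk_succ {V : Type*} {A : V → V → Prop} {m : ℕ} {u v : V} :
    HasWalk A (m + 1) u v ↔ ∃ w, A u w ∧ HasWalk A m w v := Iff.rfl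

lemma sInf_eq_iff_of_pos {S : Set ℕ} {n : ℕ} (hn : 0 < n) :
    sInf S = n ↔ n ∈ S ∧ ∀ m < n, m ∉ S := by
  constructor
  · intro h
    have hne : S.Nonempty := by
      by_contra hS
      rw [Set.not_nonempty_iff_eq_empty] at hS
      rw [hS, Nat.sInf_empty] at h; omega
    exact ⟨h ▸ Nat.sInf_mem hne, fun m hm => Nat.notMem_of_lt_sInf (h ▸ hm)⟩
  · rintro ⟨h1, h2⟩
    refine le_antisymm (Nat.sInf_le h1) ?_
    by_contra hlt
    push_neg at hlt
    exact h2 _ hlt (Nat.sInf_mem ⟨n, h1⟩)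

lemma hasWalk_of_fun {V : Type*} {A : V → V → Prop} :
    ∀ {m : ℕ} {u v : V} (f : ℕ → V), f 0 = u → f m = v →
      (∀ i < m, A (f i) (f (i + 1))) → HasWalk A m u v := by
  intro m
  induction m with
  | zero =>
    intro u v f h0 hm _
    rw [hasWalk_zero, ← h0, ← hm]
  | succ n ih =>
    intro u v f h0 hm hadj
    exact ⟨f 1, h0 ▸ hadj 0 (Nat.succ_pos n),
      ih (fun i => f (i + 1)) rfl hm (fun i hi => hadj (i + 1) (by omega))⟩

lemma fun_of_hasWalk {V : Type*} {A : V → V → Prop} :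
    ∀ {m : ℕ} {u v : V}, HasWalk A m u v →
      ∃ f : ℕ → V, f 0 = u ∧ f m = v ∧ ∀ i < m, A (f i) (f (i + 1)) := by
  intro m
  induction m with
  | zero =>
    intro u v h
    exact ⟨fun _ => u, rfl, (hasWalk_zero.mp h).symm ▸ rfl, by omega⟩
  | succ n ih =>
    rintro u v ⟨x, hx, hw⟩
    obtain ⟨g, hg0, hgm, hgadj⟩ := ih hw
    refine ⟨fun t => match t with | 0 => u | (t + 1) => g t, rfl, hgm, ?_⟩
    intro i hi
    match i with
    | 0 => simpa [hg0] using hx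
    | (t + 1) => exact hgadj t (by omega)

lemma exists_minWalk {V : Type*} {A : V → V → Prop} {u v : V} {n : ℕ}
    (hmem : HasWalk A n u v) (hmin : ∀ m < n, ¬ HasWalk A m u v) :
    ∃ f : ℕ → V, f 0 = u ∧ f n = v ∧ (∀ i < n, A (f i) (f (i + 1))) ∧
      ∀ i ≤ n, ∀ j ≤ n, i < j → f i ≠ f j := by
  obtain ⟨f, h0, hn, hadj⟩ := fun_of_hasWalk hmem
  refine ⟨f, h0, hn, hadj, ?_⟩
  intro i hi j hj hij heq
  set e := j - i with he
  have h2 : HasWalk A (n - e) u v := by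
    apply hasWalk_of_fun (fun t => if t < i then f t else f (t + e))
    · rcases Nat.eq_zero_or_pos i with hi0 | hip
      · subst hi0
        simp only [Nat.lt_irrefl, if_neg (by omega : ¬ (0:ℕ) < 0)]
        have h3 : 0 + e = j := by omega
        rw [h3, ← heq]
        exact h0
      · simpa [hip] using h0
    · have h3 : ¬ (n - e < i) := by omega
      simp only [if_neg h3]
      have h4 : n - e + e = n := by omega
      rw [h4]; exact hn
    · intro t ht
      by_cases h4 : t + 1 < i
      · have h5 : t < i := by omega
        simp only [if_pos h4, if_pos h5]
        exact hadj t (by omega)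
      · by_cases h5 : t < i
        · have h6 : t + 1 = i := by omega
          simp only [if_pos h5, if_neg h4]
          have h7 : t + 1 + e = j := by omega
          rw [h7, ← heq, ← h6]
          exact hadj t (by omega)
        · simp only [if_neg h4, if_neg h5]
          have h7 : t + 1 + e = t + e + 1 := by omega
          rw [h7]
          exact hadj (t + e) (by omega)
  exact hmin (n - e) (by omega) h2

lemma cycle_of_minWalk {V : Type*} {A : V → V → Prop} {a b : V} {j : ℕ}
    (hab : A a b) (hj1 : 1 ≤ j) (hmem : HasWalk A j b a)
    (hmin : ∀ m < j, ¬ HasWalk A m b a) :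
    IsCycleThroughEdge A a b (j + 1) := by
  obtain ⟨f, h0, hjv, hadj, hinj⟩ := exists_minWalk hmem hmin
  haveI : NeZero (j + 1) := ⟨Nat.succ_ne_zero j⟩
  refine ⟨Nat.succ_pos j, fun i => f ((i - 1).val), ?_, ?_, ?_, ?_⟩
  · intro i i' h
    have hv : ((i - 1).val) = ((i' - 1).val) := by
      by_contra hne
      have ha := ZMod.val_lt (i - 1)
      have hb := ZMod.val_lt (i' - 1)
      rcases Nat.lt_or_ge (i - 1).val (i' - 1).val with hlt | hge
      · exact hinj _ (by omega) _ (by omega) hlt h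
      · exact hinj _ (by omega) _ (by omega) (by omega) h.symm
    have h2 : i - 1 = i' - 1 := by
      rw [← ZMod.natCast_zmod_val (i - 1), ← ZMod.natCast_zmod_val (i' - 1), hv]
    have := congrArg (· + 1) h2
    simpa using this
  · intro i
    show A (f ((i - 1).val)) (f ((i + 1 - 1).val))
    have key : (i + 1 - 1 : ZMod (j + 1)) = i := by ring
    rw [key]
    rcases Nat.eq_zero_or_pos i.val with h | h
    · have hi : i = 0 := (ZMod.val_eq_zero i).mp h
      subst hi
      have h1 : ((0 : ZMod (j + 1)) - 1).val = j := by
        rw [zero_sub]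
        exact ZMod.val_neg_one j
      rw [h1, hjv, ZMod.val_zero, h0]
      exact hab
    · obtain ⟨t, ht⟩ : ∃ t, i.val = t + 1 := ⟨i.val - 1, by omega⟩
      have hiv := ZMod.val_lt i
      have hi : i = ((t + 1 : ℕ) : ZMod (j + 1)) := by rw [← ht, ZMod.natCast_zmod_val]
      have hsub : i - 1 = ((t : ℕ) : ZMod (j + 1)) := by rw [hi]; push_cast; ring
      have hv : (i - 1).val = t := by
        rw [hsub]
        exact ZMod.val_cast_of_lt (by omega)
      rw [hv, ht]
      exact hadj t (by omega)
  · show f ((0 - 1 : ZMod (j + 1)).val) = a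
    rw [zero_sub, ZMod.val_neg_one]
    exact hjv
  · show f ((1 - 1 : ZMod (j + 1)).val) = b
    rw [sub_self, ZMod.val_zero]
    exact h0

lemma walk_of_cycle {V : Type*} {A : V → V → Prop} {a b : V} {L : ℕ}
    (h : IsCycleThroughEdge A a b L) : HasWalk A (L - 1) b a := by
  obtain ⟨hL, c, hinj, hadj, h0, h1⟩ := h
  apply hasWalk_of_fun (fun i => c (1 + (i : ℕ)))
  · simpa using h1
  · show c (1 + ((L - 1 : ℕ) : ZMod L)) = a
    have key : (1 : ZMod L) + ((L - 1 : ℕ) : ZMod L) = 0 := by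
      have h2 : ((1 + (L - 1) : ℕ) : ZMod L) = 0 := by
        rw [(by omega : 1 + (L - 1) = L), ZMod.natCast_self]
      rw [← h2]; push_cast; ring
    rw [key, h0]
  · intro i _
    show A (c (1 + (i : ℕ))) (c (1 + ((i + 1 : ℕ) : ZMod L)))
    have h2 : (1 : ZMod L) + ((i + 1 : ℕ) : ZMod L) = 1 + (i : ℕ) + 1 := by push_cast; ring
    rw [h2]
    exact hadj _

lemma cycle_src_ne {V : Type*} {A : V → V → Prop} {a b : V} {L : ℕ}
    (h : IsCycleThroughEdge A a b L) (hL : 2 ≤ L) : a ≠ b := by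
  obtain ⟨_, c, hinj, _, h0, h1⟩ := h
  rw [← h0, ← h1]
  intro hc
  have h01 : (0 : ZMod L) = 1 := hinj hc
  have h2 : ((1 : ℕ) : ZMod L).val = 1 := ZMod.val_cast_of_lt (by omega)
  rw [Nat.cast_one, ← h01, ZMod.val_zero] at h2
  omega

lemma cycleLen_eq_iff {V : Type*} {A : V → V → Prop} {a b : V} {k : ℕ}
    (hab : A a b) (hk : 1 ≤ k) :
    cycleLen A a b = k + 1 ↔ ddist A b a = k := by
  rw [cycleLen, ddist, sInf_eq_iff_of_pos (by omega), sInf_eq_iff_of_pos (by omega)]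
  constructor
  · rintro ⟨hC, hCmin⟩
    have hw : HasWalk A k b a := by simpa using walk_of_cycle hC
    refine ⟨hw, ?_⟩
    intro m hm hmW
    have hTne : {m | HasWalk A m b a}.Nonempty := ⟨m, hmW⟩
    have hjmem : HasWalk A (sInf {m | HasWalk A m b a}) b a := Nat.sInf_mem hTne
    have hjle : sInf {m | HasWalk A m b a} ≤ m := Nat.sInf_le hmW
    have hjmin : ∀ m' < sInf {m | HasWalk A m b a}, ¬ HasWalk A m' b a :=
      fun m' hm' => Nat.notMem_of_lt_sInf hm'
    have hj1 : 1 ≤ sInf {m | HasWalk A m b a} := by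
      rcases Nat.eq_zero_or_pos (sInf {m | HasWalk A m b a}) with h0 | hp
      · exfalso
        rw [h0] at hjmem
        exact cycle_src_ne hC (by omega) (hasWalk_zero.mp hjmem).symm
      · exact hp
    exact hCmin _ (by omega) (cycle_of_minWalk hab hj1 hjmem hjmin)
  · rintro ⟨hkmem, hkmin⟩
    refine ⟨cycle_of_minWalk hab hk hkmem hkmin, ?_⟩
    intro L hL hLC
    exact hkmin (L - 1) (by omega) (walk_of_cycle hLC)

lemma ddist_self {V : Type*} {A : V → V → Prop} (u : V) : ddist A u u = 0 :=
  Nat.sInf_eq_zero.mpr (Or.inl rfl)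

lemma ne_of_ddist_pos {V : Type*} {A : V → V → Prop} {u v : V} {k : ℕ}
    (hk : 1 ≤ k) (h : ddist A u v = k) : u ≠ v := by
  intro he
  subst he
  rw [ddist_self] at h
  omega

/-! ### Kautz structure lemmas -/

instance {d D : ℕ} : Finite (KautzVertex d D) :=
  inferInstanceAs (Finite {w : Fin (D + 1) → Fin (d + 1) // IsKautzWord d (D + 1) w})

def kinit {d D : ℕ} (w : KautzVertex d (D + 1)) : KautzVertex d D :=
  ⟨fun i => w.1 ⟨i.1, by omega⟩, fun i h => w.2 i (by omega)⟩

def ktail {d D : ℕ} (w : KautzVertex d (D + 1)) : KautzVertex d D :=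
  ⟨fun i => w.1 ⟨i.1 + 1, by omega⟩, fun i h => w.2 (i + 1) (by omega)⟩

lemma adj_init_tail {d D : ℕ} (w : KautzVertex d (D + 1)) :
    KautzAdj d D (kinit w) (ktail w) := fun _ => rfl

lemma kautzAdj_succ_iff {d D : ℕ} {w w' : KautzVertex d (D + 1)} :
    KautzAdj d (D + 1) w w' ↔ ktail w = kinit w' := by
  constructor
  · intro h
    apply Subtype.ext; funext i
    exact (h i).symm
  · intro h i
    exact (congrFun (congrArg Subtype.val h) i).symm

def glueWord {d E : ℕ} (u v : KautzVertex d (E + 1)) : Fin (E + 3) → Fin (d + 1) :=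
  fun j => if hj : j.1 < E + 2 then u.1 ⟨j.1, hj⟩ else v.1 ⟨E + 1, by omega⟩

lemma glueWord_lt {d E : ℕ} (u v : KautzVertex d (E + 1)) {j : Fin (E + 3)}
    (h : j.1 < E + 2) : glueWord u v j = u.1 ⟨j.1, h⟩ := dif_pos h

lemma glueWord_last {d E : ℕ} (u v : KautzVertex d (E + 1)) {j : Fin (E + 3)}
    (h : ¬ j.1 < E + 2) : glueWord u v j = v.1 ⟨E + 1, by omega⟩ := dif_neg h

def glue {d E : ℕ} (u v : KautzVertex d (E + 1)) (huv : KautzAdj d (E + 1) u v) :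
    KautzVertex d (E + 2) :=
  ⟨glueWord u v, by
    intro i h
    by_cases h2 : i + 1 < E + 2
    · rw [glueWord_lt u v (show ((⟨i, Nat.lt_of_succ_lt h⟩ : Fin (E + 3)) : ℕ) < E + 2 by show i < E + 2; omega),
        glueWord_lt u v (show ((⟨i + 1, h⟩ : Fin (E + 3)) : ℕ) < E + 2 from h2)]
      exact u.2 i h2
    · have h3 : i = E + 1 := by omega
      subst h3
      rw [glueWord_lt u v (show ((⟨E + 1, Nat.lt_of_succ_lt h⟩ : Fin (E + 3)) : ℕ) < E + 2 by show E + 1 < E + 2; omega),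
        glueWord_last u v (show ¬ ((⟨E + 1 + 1, h⟩ : Fin (E + 3)) : ℕ) < E + 2 by show ¬ E + 1 + 1 < E + 2; omega)]
      have h4 : u.1 ⟨E + 1, by omega⟩ = v.1 ⟨E, by omega⟩ := (huv ⟨E, by omega⟩).symm
      rw [h4]
      exact v.2 E (by omega)⟩

def arcEquiv {d E : ℕ} : KautzVertex d (E + 2) ≃
    {p : KautzVertex d (E + 1) × KautzVertex d (E + 1) // KautzAdj d (E + 1) p.1 p.2} where
  toFun w := ⟨(kinit w, ktail w), adj_init_tail w⟩
  invFun p := glue p.1.1 p.1.2 p.2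
  left_inv w := by
    apply Subtype.ext; funext j
    show glueWord (kinit w) (ktail w) j = w.1 j
    by_cases hj : (j : ℕ) < E + 2
    · rw [glueWord_lt _ _ hj]
      exact congrArg w.1 (Fin.ext rfl)
    · rw [glueWord_last _ _ hj]
      show w.1 ⟨E + 1 + 1, by omega⟩ = w.1 j
      exact congrArg w.1 (Fin.ext (by have := j.2; show E + 1 + 1 = (j : ℕ); omega))
  right_inv p := by
    obtain ⟨⟨u, v⟩, huv⟩ := p
    apply Subtype.ext
    apply Prod.ext
    · apply Subtype.ext; funext i
      show glueWord u v ⟨i.1, by have := i.2; omega⟩ = u.1 i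
      rw [glueWord_lt u v (show ((⟨i.1, by have := i.2; omega⟩ : Fin (E + 3)) : ℕ) < E + 2 from i.2)]
    · apply Subtype.ext; funext i
      show glueWord u v ⟨i.1 + 1, by have := i.2; omega⟩ = v.1 i
      by_cases hj : i.1 + 1 < E + 2
      · rw [glueWord_lt u v (show ((⟨i.1 + 1, by have := i.2; omega⟩ : Fin (E + 3)) : ℕ) < E + 2 from hj)]
        exact (huv ⟨i.1, by omega⟩).symm
      · rw [glueWord_last u v (show ¬ ((⟨i.1 + 1, by have := i.2; omega⟩ : Fin (E + 3)) : ℕ) < E + 2 from hj)]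
        exact congrArg v.1 (Fin.ext (by have := i.2; show E + 1 = (i : ℕ); omega))

lemma hasWalk_kautz_succ_iff {d E : ℕ} :
    ∀ {m : ℕ} {w w' : KautzVertex d (E + 2)},
      HasWalk (KautzAdj d (E + 2)) (m + 1) w w' ↔
      HasWalk (KautzAdj d (E + 1)) m (ktail w) (kinit w') := by
  intro m
  induction m with
  | zero =>
    intro w w'
    rw [hasWalk_succ]
    constructor
    · rintro ⟨x, hx, h⟩
      rw [hasWalk_zero] at h
      subst h
      exact kautzAdj_succ_iff.mp hx
    · intro h
      exact ⟨w', kautzAdj_succ_iff.mpr h, rfl⟩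
  | succ n ih =>
    intro w w'
    rw [hasWalk_succ]
    constructor
    · rintro ⟨x, hx, h⟩
      rw [ih] at h
      refine hasWalk_succ.mpr ⟨ktail x, ?_, h⟩
      rw [kautzAdj_succ_iff.mp hx]
      exact adj_init_tail x
    · intro h
      obtain ⟨y, hy, h2⟩ := hasWalk_succ.mp h
      refine ⟨arcEquiv.symm ⟨(ktail w, y), hy⟩, ?_, ?_⟩
      · rw [kautzAdj_succ_iff]
        have h3 := arcEquiv.right_inv ⟨(ktail w, y), hy⟩
        exact (congrArg (fun q => q.1.1) h3).symm
      · rw [ih]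
        have h3 := arcEquiv.right_inv ⟨(ktail w, y), hy⟩
        have h4 : ktail (arcEquiv.symm ⟨(ktail w, y), hy⟩) = y := congrArg (fun q => q.1.2) h3
        rw [h4]
        exact h2

lemma ddist_kautz_succ_iff {d E k : ℕ} (hk : 1 ≤ k) {w w' : KautzVertex d (E + 2)}
    (hne : w ≠ w') :
    ddist (KautzAdj d (E + 2)) w w' = k + 1 ↔
    ddist (KautzAdj d (E + 1)) (ktail w) (kinit w') = k := by
  rw [ddist, ddist, sInf_eq_iff_of_pos (by omega : 0 < k + 1),
    sInf_eq_iff_of_pos (by omega : 0 < k)]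
  constructor
  · rintro ⟨h1, h2⟩
    refine ⟨hasWalk_kautz_succ_iff.mp h1, ?_⟩
    intro m hm hmem
    exact h2 (m + 1) (by omega) (hasWalk_kautz_succ_iff.mpr hmem)
  · rintro ⟨h1, h2⟩
    refine ⟨hasWalk_kautz_succ_iff.mpr h1, ?_⟩
    intro m hm hmem
    match m, hmem with
    | 0, hmem => exact hne hmem
    | (t + 1), hmem =>
      exact h2 t (by omega)
        (hasWalk_kautz_succ_iff.mp (show HasWalk (KautzAdj d (E + 2)) (t + 1) w w' from hmem))

/-! ### Degree equivalences -/

def inWord {d E : ℕ} (x : KautzVertex d (E + 1)) (y : Fin (d + 1)) :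
    Fin (E + 2) → Fin (d + 1) :=
  fun j => if j.1 = 0 then y else x.1 ⟨j.1 - 1, by have := j.2; omega⟩

lemma inWord_zero {d E : ℕ} (x : KautzVertex d (E + 1)) (y : Fin (d + 1)) {j : Fin (E + 2)}
    (h : j.1 = 0) : inWord x y j = y := if_pos h

lemma inWord_pos {d E : ℕ} (x : KautzVertex d (E + 1)) (y : Fin (d + 1)) {j : Fin (E + 2)}
    (h : ¬ j.1 = 0) : inWord x y j = x.1 ⟨j.1 - 1, by have := j.2; omega⟩ := if_neg h

def outWord {d E : ℕ} (x : KautzVertex d (E + 1)) (y : Fin (d + 1)) :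
    Fin (E + 2) → Fin (d + 1) :=
  fun j => if hj : j.1 < E + 1 then x.1 ⟨j.1 + 1, by omega⟩ else y

lemma outWord_lt {d E : ℕ} (x : KautzVertex d (E + 1)) (y : Fin (d + 1)) {j : Fin (E + 2)}
    (h : j.1 < E + 1) : outWord x y j = x.1 ⟨j.1 + 1, by omega⟩ := dif_pos h

lemma outWord_last {d E : ℕ} (x : KautzVertex d (E + 1)) (y : Fin (d + 1)) {j : Fin (E + 2)}
    (h : ¬ j.1 < E + 1) : outWord x y j = y := dif_neg h

def inLetterEquiv {d E : ℕ} (x : KautzVertex d (E + 1)) :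
    {a : KautzVertex d (E + 1) // KautzAdj d (E + 1) a x} ≃
      {y : Fin (d + 1) // y ≠ x.1 ⟨0, by omega⟩} where
  toFun a := ⟨a.1.1 ⟨0, by omega⟩, by
    have h1 : x.1 ⟨0, by omega⟩ = a.1.1 ⟨1, by omega⟩ := a.2 ⟨0, by omega⟩
    rw [h1]
    exact a.1.2 0 (by omega)⟩
  invFun y := ⟨⟨inWord x y.1, by
      intro i h
      match i, h with
      | 0, h => exact y.2
      | (t + 1), h => exact x.2 t (by omega)⟩, fun i => rfl⟩
  left_inv a := by
    apply Subtype.ext; apply Subtype.ext; funext j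
    match j with
    | ⟨0, hj⟩ => rfl
    | ⟨t + 1, hj⟩ => exact a.2 ⟨t, by omega⟩
  right_inv y := Subtype.ext rfl

def outLetterEquiv {d E : ℕ} (x : KautzVertex d (E + 1)) :
    {b : KautzVertex d (E + 1) // KautzAdj d (E + 1) x b} ≃
      {y : Fin (d + 1) // y ≠ x.1 ⟨E + 1, by omega⟩} where
  toFun b := ⟨b.1.1 ⟨E + 1, by omega⟩, by
    intro hc
    have h1 : b.1.1 ⟨E, by omega⟩ = x.1 ⟨E + 1, by omega⟩ := b.2 ⟨E, by omega⟩
    exact b.1.2 E (by omega) (h1.trans hc.symm)⟩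
  invFun y := ⟨⟨outWord x y.1, by
      intro i h
      by_cases h1 : i + 1 < E + 1
      · rw [outWord_lt x y.1
            (show ((⟨i, Nat.lt_of_succ_lt h⟩ : Fin (E + 2)) : ℕ) < E + 1 by
              show i < E + 1; omega),
          outWord_lt x y.1 (show ((⟨i + 1, h⟩ : Fin (E + 2)) : ℕ) < E + 1 from h1)]
        exact x.2 (i + 1) (by omega)
      · rw [outWord_lt x y.1
            (show ((⟨i, Nat.lt_of_succ_lt h⟩ : Fin (E + 2)) : ℕ) < E + 1 by
              show i < E + 1; omega),
          outWord_last x y.1 (show ¬ ((⟨i + 1, h⟩ : Fin (E + 2)) : ℕ) < E + 1 by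
            show ¬ i + 1 < E + 1; omega)]
        intro hc
        exact y.2 (hc.symm.trans (congrArg x.1 (Fin.ext (by show i + 1 = E + 1; omega))))⟩, by
    intro i
    show outWord x y.1 i.castSucc = x.1 i.succ
    rw [outWord_lt x y.1 (show ((i.castSucc : Fin (E + 2)) : ℕ) < E + 1 from i.2)]
    exact congrArg x.1 (Fin.ext rfl)⟩
  left_inv b := by
    apply Subtype.ext; apply Subtype.ext; funext j
    show outWord x (b.1.1 ⟨E + 1, by omega⟩) j = b.1.1 j
    by_cases hj : (j : ℕ) < E + 1
    · rw [outWord_lt _ _ hj]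
      exact (b.2 ⟨j.1, hj⟩).symm
    · rw [outWord_last _ _ hj]
      exact congrArg b.1.1 (Fin.ext (by have := j.2; show E + 1 = (j : ℕ); omega))
  right_inv y := Subtype.ext (outWord_last x y.1 (by show ¬ E + 1 < E + 1; omega))

/-! ### Counting -/

lemma card_split' {α : Type*} [Finite α] (p q : α → Prop) :
    Nat.card {x // q x} = Nat.card {x // ¬ p x ∧ q x} + Nat.card {x // p x ∧ q x} := by
  classical
  have e : {x // q x} ≃ {x // ¬ p x ∧ q x} ⊕ {x // p x ∧ q x} :=
    (Equiv.sumCompl fun y : {x // q x} => p y.1).symm.trans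
      ((Equiv.sumComm _ _).trans
        (Equiv.sumCongr
          ((Equiv.subtypeSubtypeEquivSubtypeInter q (fun x => ¬ p x)).trans
            (Equiv.subtypeEquivRight fun x => and_comm))
          ((Equiv.subtypeSubtypeEquivSubtypeInter q p).trans
            (Equiv.subtypeEquivRight fun x => and_comm))))
  rw [Nat.card_congr e, Nat.card_sum]

noncomputable def neLetterFinEquiv {d : ℕ} (z : Fin (d + 1)) :
    {y : Fin (d + 1) // y ≠ z} ≃ Fin d :=
  Fintype.equivFinOfCardEq (by
    have : Fintype.card {y : Fin (d + 1) // ¬ (y = z)} =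
        Fintype.card (Fin (d + 1)) - Fintype.card {y : Fin (d + 1) // y = z} :=
      Fintype.card_subtype_compl _
    rw [Fintype.card_subtype_eq, Fintype.card_fin] at this
    exact this.trans (by omega))

noncomputable def tgtFinEquiv {d E : ℕ} (x : KautzVertex d (E + 1)) :
    {a : KautzVertex d (E + 1) // KautzAdj d (E + 1) a x} ≃ Fin d :=
  (inLetterEquiv x).trans (neLetterFinEquiv _)

noncomputable def srcFinEquiv {d E : ℕ} (x : KautzVertex d (E + 1)) :
    {b : KautzVertex d (E + 1) // KautzAdj d (E + 1) x b} ≃ Fin d :=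
  (outLetterEquiv x).trans (neLetterFinEquiv _)

noncomputable def arcTgtEquiv {d E : ℕ} :
    {p : KautzVertex d (E + 1) × KautzVertex d (E + 1) // KautzAdj d (E + 1) p.1 p.2} ≃
      KautzVertex d (E + 1) × Fin d where
  toFun e := (e.1.2, tgtFinEquiv e.1.2 ⟨e.1.1, e.2⟩)
  invFun q := ⟨(((tgtFinEquiv q.1).symm q.2).1, q.1), ((tgtFinEquiv q.1).symm q.2).2⟩
  left_inv e := by
    apply Subtype.ext
    have h := Equiv.symm_apply_apply (tgtFinEquiv e.1.2) ⟨e.1.1, e.2⟩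
    exact Prod.ext (congrArg Subtype.val h) rfl
  right_inv q := Prod.ext rfl (Equiv.apply_symm_apply (tgtFinEquiv q.1) q.2)

noncomputable def arcSrcEquiv {d E : ℕ} :
    {p : KautzVertex d (E + 1) × KautzVertex d (E + 1) // KautzAdj d (E + 1) p.1 p.2} ≃
      KautzVertex d (E + 1) × Fin d where
  toFun e := (e.1.1, srcFinEquiv e.1.1 ⟨e.1.2, e.2⟩)
  invFun q := ⟨(q.1, ((srcFinEquiv q.1).symm q.2).1), ((srcFinEquiv q.1).symm q.2).2⟩
  left_inv e := by
    apply Subtype.ext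
    have h := Equiv.symm_apply_apply (srcFinEquiv e.1.1) ⟨e.1.2, e.2⟩
    exact Prod.ext rfl (congrArg Subtype.val h)
  right_inv q := Prod.ext rfl (Equiv.apply_symm_apply (srcFinEquiv q.1) q.2)

lemma card_Q {d E k : ℕ} :
    Nat.card {q : {p : KautzVertex d (E + 1) × KautzVertex d (E + 1) //
        KautzAdj d (E + 1) p.1 p.2} × {p : KautzVertex d (E + 1) × KautzVertex d (E + 1) //
        KautzAdj d (E + 1) p.1 p.2} //
        ddist (KautzAdj d (E + 1)) q.1.1.2 q.2.1.1 = k} =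
      d ^ 2 * Nat.card {t : KautzVertex d (E + 1) × KautzVertex d (E + 1) //
        ddist (KautzAdj d (E + 1)) t.1 t.2 = k} := by
  have e1 := (Equiv.subtypeEquiv (arcTgtEquiv.prodCongr (arcSrcEquiv (d := d) (E := E)))
      (fun q => Iff.rfl (a := ddist (KautzAdj d (E + 1)) q.1.1.2 q.2.1.1 = k))).trans
    ((Equiv.subtypeEquiv (Equiv.prodProdProdComm (KautzVertex d (E + 1)) (Fin d)
        (KautzVertex d (E + 1)) (Fin d)) (fun r => Iff.rfl)).trans
      (Equiv.prodSubtypeFstEquivSubtypeProd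
        (p := fun t : KautzVertex d (E + 1) × KautzVertex d (E + 1) =>
          ddist (KautzAdj d (E + 1)) t.1 t.2 = k)))
  rw [Nat.card_congr e1, Nat.card_prod, Nat.card_prod]
  have hfin : Nat.card (Fin d) = d := by rw [Nat.card_eq_fintype_card, Fintype.card_fin]
  rw [hfin]
  ring

/-- For `d ≥ 2`, `D ≥ 1` and `1 ≤ k ≤ D`, the Kautz digraphs
satisfy `σ_{k+1}(d, D+1) = d² · σ_k(d, D) − ρ_k(d, D)`. -/
theorem sigma_rho_identity (d D k : ℕ) (hd : 2 ≤ d) (hD : 1 ≤ D)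
    (hk1 : 1 ≤ k) (hkD : k ≤ D) :
    (sigma d (D + 1) (k + 1) : ℤ) =
      (d : ℤ) ^ 2 * (sigma d D k : ℤ) - (rho d D k : ℤ) := by
  obtain ⟨E, rfl⟩ : ∃ E, D = E + 1 := ⟨D - 1, by omega⟩
  -- Step 1: σ_{k+1}(d, E+2) counted via the line-digraph distance formula
  have h1 : sigma d (E + 1 + 1) (k + 1) =
      Nat.card {p : KautzVertex d (E + 2) × KautzVertex d (E + 2) //
        ¬ p.1 = p.2 ∧ ddist (KautzAdj d (E + 1)) (ktail p.1) (kinit p.2) = k} := by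
    apply Nat.card_congr
    apply Equiv.subtypeEquivRight
    intro p
    exact and_congr_right fun hne => ddist_kautz_succ_iff hk1 hne
  -- Step 2: split the unrestricted count
  have h2 : Nat.card {p : KautzVertex d (E + 2) × KautzVertex d (E + 2) //
        ddist (KautzAdj d (E + 1)) (ktail p.1) (kinit p.2) = k} =
      Nat.card {p : KautzVertex d (E + 2) × KautzVertex d (E + 2) //
        ¬ p.1 = p.2 ∧ ddist (KautzAdj d (E + 1)) (ktail p.1) (kinit p.2) = k} +
      Nat.card {p : KautzVertex d (E + 2) × KautzVertex d (E + 2) //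
        p.1 = p.2 ∧ ddist (KautzAdj d (E + 1)) (ktail p.1) (kinit p.2) = k} :=
    card_split' _ _
  -- Step 3: the diagonal part equals ρ_k
  have h3 : Nat.card {p : KautzVertex d (E + 2) × KautzVertex d (E + 2) //
        p.1 = p.2 ∧ ddist (KautzAdj d (E + 1)) (ktail p.1) (kinit p.2) = k} =
      rho d (E + 1) k := by
    apply Nat.card_congr
    have e0 : {p : KautzVertex d (E + 2) × KautzVertex d (E + 2) //
        p.1 = p.2 ∧ ddist (KautzAdj d (E + 1)) (ktail p.1) (kinit p.2) = k} ≃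
        {w : KautzVertex d (E + 2) //
          ddist (KautzAdj d (E + 1)) (ktail w) (kinit w) = k} := {
      toFun := fun p => ⟨p.1.1, by have h := p.2.2; rw [← p.2.1] at h; exact h⟩
      invFun := fun w => ⟨(w.1, w.1), rfl, w.2⟩
      left_inv := fun p => Subtype.ext (Prod.ext rfl p.2.1)
      right_inv := fun w => Subtype.ext rfl }
    exact e0.trans ((Equiv.subtypeEquiv
        (q := fun e : {p : KautzVertex d (E + 1) × KautzVertex d (E + 1) //
          KautzAdj d (E + 1) p.1 p.2} => ddist (KautzAdj d (E + 1)) e.1.2 e.1.1 = k)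
        (arcEquiv (d := d) (E := E)) (fun w => Iff.rfl)).trans
      ((Equiv.subtypeSubtypeEquivSubtypeInter
        (fun p : KautzVertex d (E + 1) × KautzVertex d (E + 1) => KautzAdj d (E + 1) p.1 p.2)
        (fun p => ddist (KautzAdj d (E + 1)) p.2 p.1 = k)).trans
      (Equiv.subtypeEquivRight fun p =>
        and_congr_right fun hadj => (cycleLen_eq_iff hadj hk1).symm)))
  -- Step 4: the unrestricted count equals d² · (pairs at distance k)
  have h4 : Nat.card {p : KautzVertex d (E + 2) × KautzVertex d (E + 2) //
        ddist (KautzAdj d (E + 1)) (ktail p.1) (kinit p.2) = k} =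
      d ^ 2 * Nat.card {t : KautzVertex d (E + 1) × KautzVertex d (E + 1) //
        ddist (KautzAdj d (E + 1)) t.1 t.2 = k} := by
    exact (Nat.card_congr (Equiv.subtypeEquiv
      (q := fun q : {p : KautzVertex d (E + 1) × KautzVertex d (E + 1) //
            KautzAdj d (E + 1) p.1 p.2} × {p : KautzVertex d (E + 1) × KautzVertex d (E + 1) //
            KautzAdj d (E + 1) p.1 p.2} => ddist (KautzAdj d (E + 1)) q.1.1.2 q.2.1.1 = k)
      ((arcEquiv (d := d) (E := E)).prodCongr (arcEquiv (d := d) (E := E)))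
      (fun p => Iff.rfl))).trans card_Q
  -- Step 5: σ_k(d, E+1) equals the unrestricted distance-k count
  have h5 : sigma d (E + 1) k =
      Nat.card {t : KautzVertex d (E + 1) × KautzVertex d (E + 1) //
        ddist (KautzAdj d (E + 1)) t.1 t.2 = k} := by
    apply Nat.card_congr
    apply Equiv.subtypeEquivRight
    intro t
    exact ⟨fun h => h.2, fun h => ⟨ne_of_ddist_pos hk1 h, h⟩⟩
  rw [h1, h5]
  rw [h4, h3] at h2
  have h6 := congrArg (fun n : ℕ => (n : ℤ)) h2
  push_cast at h6
  linarith
end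

section
/- For d ≥ 2 and D ≥ 1, the map that sends a directed edge (u → v) of the Kautz digraph K(d, D) to the word of length D+2 obtained by appending the last letter of v to u is an isomorphism of digraphs from the line digraph of K(d, D) onto K(d, D+1). (The line digraph of a digraph G has the directed edges of G as vertices, with an arc from e to f whenever the head of e equals the tail of f.) -/
/-- Vertices of the line digraph: the directed edges of the digraph. -/
def LineVertex {V : Type*} (Adj : V → V → Prop) : Type _ :=
  { p : V × V // Adj p.1 p.2 }

/-- Adjacency in the line digraph: the head of `e` equals the tail of `f`. -/
def LineAdj {V : Type*} (Adj : V → V → Prop)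
    (e f : LineVertex Adj) : Prop :=
  e.1.2 = f.1.1

namespace KautzAux

def fwd (d D : ℕ) (hD : 1 ≤ D) (e : LineVertex (KautzAdj d D)) : KautzVertex d (D + 1) :=
  ⟨fun i => if h : i.1 < D + 1 then e.1.1.1 ⟨i.1, h⟩ else e.1.2.1 (Fin.last D), by
    intro i h
    dsimp only
    by_cases hi : i + 1 < D + 1
    · rw [dif_pos (Nat.lt_of_succ_lt hi), dif_pos hi]
      exact e.1.1.2 i hi
    · have hi1 : i = D := by omega
      rw [dif_pos (show i < D + 1 by omega), dif_neg hi]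
      obtain ⟨k, rfl⟩ : ∃ k, D = k + 1 := ⟨D - 1, by omega⟩
      have h1 := e.2 ⟨k, Nat.lt_succ_self k⟩
      have h2 := e.1.2.2 k (by omega)
      simp only [Fin.castSucc_mk, Fin.succ_mk] at h1
      intro hc
      apply h2
      rw [h1]
      convert hc using 2 <;> exact Fin.ext (by simp [Fin.last] <;> omega)⟩

def bwd (d D : ℕ) (w : KautzVertex d (D + 1)) : LineVertex (KautzAdj d D) :=
  ⟨(⟨fun i => w.1 i.castSucc, by
      intro i h
      have := w.2 i (Nat.lt_succ_of_lt h)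
      simpa using this⟩,
    ⟨fun i => w.1 i.succ, by
      intro i h
      have := w.2 (i + 1) (Nat.succ_lt_succ h)
      simpa using this⟩), by
    intro i
    show w.1 (i.castSucc).succ = w.1 (i.succ).castSucc
    rw [Fin.succ_castSucc]⟩

end KautzAux

/-- For `d ≥ 2`, `D ≥ 1`, the map sending a directed edge
`(u → v)` of `K(d, D)` to the word of length `D+2` obtained by appending the
last letter of `v` to `u` is an isomorphism of digraphs from the line digraph
of `K(d, D)` onto `K(d, D+1)`. -/
theorem line_digraph_iso (d D : ℕ) (hd : 2 ≤ d) (hD : 1 ≤ D) :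
    ∃ φ : LineVertex (KautzAdj d D) ≃ KautzVertex d (D + 1),
      (∀ e : LineVertex (KautzAdj d D), (φ e).1 =
          fun i : Fin (D + 2) =>
            if h : i.1 < D + 1 then e.1.1.1 ⟨i.1, h⟩
            else e.1.2.1 (Fin.last D)) ∧
      (∀ e f : LineVertex (KautzAdj d D),
        LineAdj (KautzAdj d D) e f ↔ KautzAdj d (D + 1) (φ e) (φ f)) := by
  refine ⟨⟨KautzAux.fwd d D hD, KautzAux.bwd d D, ?_, ?_⟩, fun e => rfl, ?_⟩
  · -- left inverse
    intro e
    apply Subtype.ext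
    apply Prod.ext
    · apply Subtype.ext
      funext i
      show (if h : (Fin.castSucc i).1 < D + 1 then e.1.1.1 ⟨(Fin.castSucc i).1, h⟩
            else e.1.2.1 (Fin.last D)) = e.1.1.1 i
      simp only [Fin.coe_castSucc]
      rw [dif_pos i.isLt]
    · apply Subtype.ext
      funext i
      show (if h : (Fin.succ i).1 < D + 1 then e.1.1.1 ⟨(Fin.succ i).1, h⟩
            else e.1.2.1 (Fin.last D)) = e.1.2.1 i
      simp only [Fin.val_succ]
      by_cases hi : i.1 + 1 < D + 1
      · rw [dif_pos hi]
        have h2 := e.2 ⟨i.1, by omega⟩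
        simp only [Fin.castSucc_mk, Fin.succ_mk] at h2
        rw [← h2]
      · rw [dif_neg hi]
        exact congrArg _ (Fin.ext (by simp [Fin.last]; omega))
  · -- right inverse
    intro w
    apply Subtype.ext
    funext i
    show (if h : i.1 < D + 1 then w.1 (Fin.castSucc ⟨i.1, h⟩)
          else w.1 (Fin.succ (Fin.last D))) = w.1 i
    by_cases hi : i.1 < D + 1
    · rw [dif_pos hi]
      exact congrArg _ (Fin.ext (by simp))
    · rw [dif_neg hi]
      exact congrArg _ (Fin.ext (by simp [Fin.last]; omega))
  · -- adjacency iff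
    intro e f
    constructor
    · intro h i
      show (if hh : (Fin.castSucc i).1 < D + 1 then f.1.1.1 ⟨(Fin.castSucc i).1, hh⟩
            else f.1.2.1 (Fin.last D)) =
           (if hh : (Fin.succ i).1 < D + 1 then e.1.1.1 ⟨(Fin.succ i).1, hh⟩
            else e.1.2.1 (Fin.last D))
      simp only [Fin.coe_castSucc, Fin.val_succ]
      rw [dif_pos i.isLt]
      have hf : f.1.1.1 ⟨i.1, i.isLt⟩ = e.1.2.1 ⟨i.1, i.isLt⟩ := by rw [← h]
      by_cases hi : i.1 + 1 < D + 1
      · rw [dif_pos hi]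
        have h2 := e.2 ⟨i.1, by omega⟩
        simp only [Fin.castSucc_mk, Fin.succ_mk] at h2
        rw [hf, h2]
      · rw [dif_neg hi]
        rw [hf]
        exact congrArg _ (Fin.ext (by simp [Fin.last]; omega))
    · intro h
      apply Subtype.ext
      funext j
      have hj : (if hh : (Fin.castSucc j).1 < D + 1 then f.1.1.1 ⟨(Fin.castSucc j).1, hh⟩
            else f.1.2.1 (Fin.last D)) =
           (if hh : (Fin.succ j).1 < D + 1 then e.1.1.1 ⟨(Fin.succ j).1, hh⟩
            else e.1.2.1 (Fin.last D)) := h j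
      simp only [Fin.coe_castSucc, Fin.val_succ] at hj
      rw [dif_pos j.isLt] at hj
      by_cases hjd : j.1 + 1 < D + 1
      · rw [dif_pos hjd] at hj
        have h2 := e.2 ⟨j.1, by omega⟩
        simp only [Fin.castSucc_mk, Fin.succ_mk] at h2
        rw [← h2] at hj
        calc e.1.2.1 j = e.1.2.1 ⟨j.1, j.isLt⟩ := congrArg _ (Fin.ext rfl)
          _ = f.1.1.1 ⟨j.1, j.isLt⟩ := hj.symm
          _ = f.1.1.1 j := congrArg _ (Fin.ext rfl)
      · rw [dif_neg hjd] at hj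
        have hjl : e.1.2.1 j = e.1.2.1 (Fin.last D) :=
          congrArg _ (Fin.ext (by simp [Fin.last]; omega))
        rw [hjl, ← hj]
end

section
/- Fix d ≥ 2 and D ≥ 2. For every k with 1 ≤ k < ⌊D/2⌋ + 2, one has Δ_k(d, D) = 0; that is, ρ_k(d, D) = ρ_k(d, D−1): the number of edges whose shortest directed cycle has length k+1 is the same in K(d, D) and in K(d, D−1). -/
namespace KP

def PeriodOn {α : Type*} (f : ℕ → α) (n p : ℕ) : Prop := ∀ j, j + p < n → f j = f (j + p)

noncomputable def minperOn {α : Type*} (f : ℕ → α) (n : ℕ) : ℕ := sInf {p | 0 < p ∧ PeriodOn f n p}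

lemma periodOn_self {α : Type*} (f : ℕ → α) (n : ℕ) : PeriodOn f n n :=
  fun _ h => absurd h (by omega)

lemma minper_spec {α : Type*} (f : ℕ → α) (n : ℕ) (hn : 0 < n) :
    0 < minperOn f n ∧ PeriodOn f n (minperOn f n) :=
  Nat.sInf_mem (⟨n, hn, periodOn_self f n⟩ : Set.Nonempty {p | 0 < p ∧ PeriodOn f n p})

lemma minper_le {α : Type*} (f : ℕ → α) {n q : ℕ} (hq : 0 < q) (h : PeriodOn f n q) :
    minperOn f n ≤ q := Nat.sInf_le ⟨hq, h⟩

lemma minper_eq {α : Type*} (f : ℕ → α) {n p : ℕ} (hn : 0 < n) (hp : 0 < p)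
    (h : PeriodOn f n p) (hmin : ∀ q, 0 < q → q < p → ¬ PeriodOn f n q) :
    minperOn f n = p := by
  have h1 := minper_le f hp h
  rcases Nat.lt_or_ge (minperOn f n) p with h2 | h2
  · obtain ⟨hpos, hper⟩ := minper_spec f n hn
    exact absurd hper (hmin _ hpos h2)
  · omega

lemma periodOn_mod {α : Type*} {f : ℕ → α} {n p : ℕ} (hp : 0 < p) (h : PeriodOn f n p) :
    ∀ j, j < n → f j = f (j % p) := by
  intro j
  induction j using Nat.strong_induction_on with
  | _ j ih =>
    intro hj
    by_cases hjp : j < p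
    · rw [Nat.mod_eq_of_lt hjp]
    · push_neg at hjp
      have h1 : (j - p) + p < n := by omega
      have h2 := h (j - p) h1
      rw [show j - p + p = j by omega] at h2
      rw [← h2, ih (j - p) (by omega) (by omega)]
      congr 1
      conv_rhs => rw [show j = j - p + p by omega, Nat.add_mod_right]

lemma periodOn_congr {α : Type*} {f g : ℕ → α} {n q : ℕ} (h : ∀ j, j < n → f j = g j)
    (hq : PeriodOn f n q) : PeriodOn g n q := by
  intro j hj
  rw [← h j (by omega), ← h (j + q) hj]
  exact hq j hj

lemma minper_congr {α : Type*} {f g : ℕ → α} {n : ℕ} (h : ∀ j, j < n → f j = g j) :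
    minperOn f n = minperOn g n := by
  unfold minperOn
  congr 1
  ext q
  exact ⟨fun ⟨h1, h2⟩ => ⟨h1, periodOn_congr h h2⟩,
    fun ⟨h1, h2⟩ => ⟨h1, periodOn_congr (fun j hj => (h j hj).symm) h2⟩⟩

variable {d : ℕ}

def edgeWord (d D : ℕ) (u v : KautzVertex d D) : ℕ → Fin (d + 1) :=
  fun j => if h : j < D + 1 then u.1 ⟨j, h⟩ else v.1 (Fin.last D)

lemma edgeWord_lt {D : ℕ} (u v : KautzVertex d D) {j : ℕ} (h : j < D + 1) :
    edgeWord d D u v j = u.1 ⟨j, h⟩ := dif_pos h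

lemma edgeWord_succ {D : ℕ} {u v : KautzVertex d D} (huv : KautzAdj d D u v) {j : ℕ}
    (h : j < D + 1) : edgeWord d D u v (j + 1) = v.1 ⟨j, h⟩ := by
  by_cases h2 : j + 1 < D + 1
  · rw [edgeWord_lt u v h2]
    have h3 := huv ⟨j, by omega⟩
    exact h3.symm
  · show (if h : j + 1 < D + 1 then u.1 ⟨j+1, h⟩ else v.1 (Fin.last D)) = v.1 ⟨j, h⟩
    rw [dif_neg h2]
    have h4 : Fin.last D = (⟨j, h⟩ : Fin (D + 1)) := Fin.ext (by show D = j; omega)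
    rw [h4]

lemma kautzOn_edgeWord {D : ℕ} {u v : KautzVertex d D} (hD : 1 ≤ D) (huv : KautzAdj d D u v) :
    ∀ j, j + 1 < D + 2 → edgeWord d D u v j ≠ edgeWord d D u v (j + 1) := by
  intro j hj
  by_cases h2 : j + 1 < D + 1
  · rw [edgeWord_lt u v (by omega), edgeWord_lt u v h2]
    exact u.2 j h2
  · have hjD : D = j := by omega
    subst hjD
    have e1 : edgeWord d D u v (D - 1 + 1) = v.1 ⟨D - 1, by omega⟩ :=
      edgeWord_succ (j := D - 1) huv (by omega)
    rw [show D - 1 + 1 = D by omega] at e1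
    have e2 : edgeWord d D u v (D + 1) = v.1 ⟨D, by omega⟩ :=
      edgeWord_succ (j := D) huv (by omega)
    rw [e1, e2]
    have h3 := v.2 (D - 1) (by omega)
    have h4 : (⟨D - 1 + 1, by omega⟩ : Fin (D + 1)) = ⟨D, by omega⟩ := by
      apply Fin.ext
      show D - 1 + 1 = D
      omega
    rwa [h4] at h3


lemma cycle_period {D L : ℕ} {u v : KautzVertex d D}
    (hc : IsCycleThroughEdge (KautzAdj d D) u v L) :
    PeriodOn (edgeWord d D u v) (D + 2) L := by
  obtain ⟨hL, c, hinj, hadj, hc0, hc1⟩ := hc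
  have key : ∀ (j : ℕ) (h : j < D + 1) (i : ZMod L),
      (c i).1 ⟨j, h⟩ = (c (i + (j : ZMod L))).1 ⟨0, by omega⟩ := by
    intro j
    induction j with
    | zero =>
      intro h i
      simp
    | succ j ih =>
      intro h i
      have h1 : (c i).1 ⟨j + 1, h⟩ = (c (i + 1)).1 ⟨j, by omega⟩ :=
        (hadj i ⟨j, by omega⟩).symm
      rw [h1, ih (by omega) (i + 1)]
      have hcast : i + 1 + ((j : ℕ) : ZMod L) = i + ((j + 1 : ℕ) : ZMod L) := by
        push_cast
        ring
      rw [hcast]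
  have keyA : ∀ (j : ℕ), j < D + 2 → edgeWord d D u v j = (c (j : ZMod L)).1 ⟨0, by omega⟩ := by
    intro j h
    by_cases h1 : j < D + 1
    · rw [edgeWord_lt u v h1, ← hc0, key j h1 0, zero_add]
    · have hj : j = D + 1 := by omega
      subst hj
      show (if h : D + 1 < D + 1 then u.1 ⟨D + 1, h⟩ else v.1 (Fin.last D)) = _
      rw [dif_neg (by omega), ← hc1]
      have := key D (by omega) 1
      rw [show (Fin.last D) = (⟨D, by omega⟩ : Fin (D+1)) from rfl, this]
      have hcast : (1 : ZMod L) + ((D : ℕ) : ZMod L) = ((D + 1 : ℕ) : ZMod L) := by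
        push_cast
        ring
      rw [hcast]
  intro j hj
  have hcast : ((j + L : ℕ) : ZMod L) = ((j : ℕ) : ZMod L) := by
    push_cast
    rw [ZMod.natCast_self, add_zero]
  rw [keyA j (by omega), keyA (j + L) hj, hcast]

lemma period_cycle {D p : ℕ} {u v : KautzVertex d D} (hD : 1 ≤ D)
    (huv : KautzAdj d D u v) (hp2 : 2 ≤ p) (hpD : p ≤ D + 1)
    (hper : PeriodOn (edgeWord d D u v) (D + 2) p)
    (hmin : ∀ q, 0 < q → q < p → ¬ PeriodOn (edgeWord d D u v) (D + 2) q) :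
    IsCycleThroughEdge (KautzAdj d D) u v p := by
  haveI : NeZero p := ⟨by omega⟩
  haveI : Fact (1 < p) := ⟨by omega⟩
  have hmod : ∀ j, j < D + 2 → edgeWord d D u v j = edgeWord d D u v (j % p) :=
    periodOn_mod (by omega) hper
  have hvlt : ∀ x : ZMod p, x.val < D + 1 := fun x => lt_of_lt_of_le x.val_lt (by omega)
  have hw : ∀ i : ZMod p, IsKautzWord d (D + 1)
      (fun j : Fin (D + 1) => edgeWord d D u v ((i + (j.val : ZMod p)).val)) := by
    intro i j hj
    show edgeWord d D u v ((i + ((j : ℕ) : ZMod p)).val) ≠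
      edgeWord d D u v ((i + ((j + 1 : ℕ) : ZMod p)).val)
    have hc : ((j + 1 : ℕ) : ZMod p) = ((j : ℕ) : ZMod p) + 1 := by push_cast; ring
    rw [hc, ← add_assoc]
    set x := i + ((j : ℕ) : ZMod p) with hx
    have hval : (x + 1).val = (x.val + 1) % p := by
      rw [ZMod.val_add, ZMod.val_one]
    rw [hval, ← hmod (x.val + 1) (by have := hvlt x; omega)]
    exact kautzOn_edgeWord hD huv x.val (by have := hvlt x; omega)
  let c : ZMod p → KautzVertex d D :=
    fun i => ⟨fun j : Fin (D + 1) => edgeWord d D u v ((i + (j.val : ZMod p)).val), hw i⟩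
  have hadj : ∀ i, KautzAdj d D (c i) (c (i + 1)) := by
    intro i j
    show edgeWord d D u v ((i + 1 + ((j.castSucc.val : ℕ) : ZMod p)).val) =
      edgeWord d D u v ((i + ((j.succ.val : ℕ) : ZMod p)).val)
    congr 2
    rw [Fin.coe_castSucc, Fin.val_succ]
    push_cast
    ring
  have hc0 : c 0 = u := by
    apply Subtype.ext
    funext j
    show edgeWord d D u v ((0 + ((j.val : ℕ) : ZMod p)).val) = u.1 j
    rw [zero_add, ZMod.val_natCast, ← hmod j.val (by have := j.isLt; omega)]
    exact edgeWord_lt u v j.isLt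
  have hc1 : c 1 = v := by
    apply Subtype.ext
    funext j
    show edgeWord d D u v ((1 + ((j.val : ℕ) : ZMod p)).val) = v.1 j
    have h1 : ((1 : ZMod p) + ((j.val : ℕ) : ZMod p)) = ((1 + j.val : ℕ) : ZMod p) := by
      push_cast; ring
    rw [h1, ZMod.val_natCast, ← hmod (1 + j.val) (by have := j.isLt; omega),
      show 1 + j.val = j.val + 1 by ring]
    exact edgeWord_succ huv j.isLt
  have hinj : Function.Injective c := by
    intro i i' h
    have h1 : ∀ j : Fin (D + 1), edgeWord d D u v ((i + (j.val : ZMod p)).val) =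
        edgeWord d D u v ((i' + (j.val : ZMod p)).val) := by
      intro j
      exact congrFun (congrArg Subtype.val h) j
    have h2 : ∀ x : ZMod p, edgeWord d D u v ((i + x).val) =
        edgeWord d D u v ((i' + x).val) := by
      intro x
      have hxx : ((x.val : ℕ) : ZMod p) = x := ZMod.natCast_rightInverse x
      have := h1 ⟨x.val, hvlt x⟩
      simpa [hxx] using this
    by_contra hne
    set r := i' - i with hr
    have hrne : r ≠ 0 := fun hc => hne (by
      have : i' = i := by
        have := sub_eq_zero.mp (hr ▸ hc)
        exact this
      exact this.symm ▸ rfl)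
    have h3 : ∀ y : ZMod p, edgeWord d D u v (y.val) = edgeWord d D u v ((y + r).val) := by
      intro y
      have := h2 (y - i)
      rw [show i + (y - i) = y by ring, show i' + (y - i) = y + r by rw [hr]; ring] at this
      exact this
    have hq0 : 0 < r.val := by
      rcases Nat.eq_zero_or_pos r.val with h | h
      · exact absurd ((ZMod.val_eq_zero r).mp h) hrne
      · exact h
    have hperq : PeriodOn (edgeWord d D u v) (D + 2) r.val := by
      intro j hj
      have e1 := hmod j (by omega)
      have e2 := hmod (j + r.val) hj
      have e3 : edgeWord d D u v (j % p) = edgeWord d D u v ((j + r.val) % p) := by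
        rw [← ZMod.val_natCast (n := p) j, ← ZMod.val_natCast (n := p) (j + r.val)]
        have := h3 ((j : ℕ) : ZMod p)
        rw [show ((j : ℕ) : ZMod p) + r = (((j + r.val : ℕ)) : ZMod p) by
          push_cast
          rw [ZMod.natCast_rightInverse r]] at this
        exact this
      rw [e1, e3, ← e2]
    exact hmin r.val hq0 (r.val_lt) hperq
  exact ⟨by omega, c, hinj, hadj, hc0, hc1⟩


lemma cycleLen_eq_minper {D : ℕ} (hD : 1 ≤ D) {u v : KautzVertex d D}
    (huv : KautzAdj d D u v)
    (hle : minperOn (edgeWord d D u v) (D + 2) ≤ D + 1) :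
    cycleLen (KautzAdj d D) u v = minperOn (edgeWord d D u v) (D + 2) := by
  obtain ⟨hP0, hPper⟩ := minper_spec (edgeWord d D u v) (D + 2) (by omega)
  set P := minperOn (edgeWord d D u v) (D + 2) with hP
  have hP2 : 2 ≤ P := by
    by_contra hc
    have hP1 : P = 1 := by omega
    have := hPper 0 (by omega)
    rw [hP1] at this
    exact kautzOn_edgeWord hD huv 0 (by omega) (by simpa using this)
  have hmin : ∀ q, 0 < q → q < P → ¬ PeriodOn (edgeWord d D u v) (D + 2) q := by
    intro q hq hqP hper
    exact absurd (minper_le _ hq hper) (by omega)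
  have hcyc := period_cycle hD huv hP2 hle hPper hmin
  apply le_antisymm
  · exact Nat.sInf_le hcyc
  · have hne : {L | IsCycleThroughEdge (KautzAdj d D) u v L}.Nonempty := ⟨P, hcyc⟩
    have hmem := Nat.sInf_mem hne
    have hper := cycle_period hmem
    exact minper_le _ hmem.1 hper

lemma cycleLen_eq_iff {D : ℕ} (hD : 1 ≤ D) {u v : KautzVertex d D}
    (huv : KautzAdj d D u v) {m : ℕ} (hm : 0 < m) (hmD : m ≤ D + 1) :
    cycleLen (KautzAdj d D) u v = m ↔ minperOn (edgeWord d D u v) (D + 2) = m := by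
  constructor
  · intro h
    have hne : {L | IsCycleThroughEdge (KautzAdj d D) u v L}.Nonempty := by
      by_contra hc
      rw [Set.not_nonempty_iff_eq_empty] at hc
      rw [cycleLen, hc, Nat.sInf_empty] at h
      omega
    have hmem := Nat.sInf_mem hne
    rw [show sInf {L | IsCycleThroughEdge (KautzAdj d D) u v L} = m from h] at hmem
    have hper := cycle_period hmem
    have hle : minperOn (edgeWord d D u v) (D + 2) ≤ m := minper_le _ hm hper
    have := cycleLen_eq_minper hD huv (by omega)
    omega
  · intro h
    rw [cycleLen_eq_minper hD huv (by omega), h]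

lemma trunc_no_smaller_period {D p q : ℕ} {f : ℕ → Fin (d + 1)}
    (hD : 2 ≤ D)
    (hKautz : ∀ j, j + 1 < D + 2 → f j ≠ f (j + 1))
    (hp : 2 ≤ p) (hpD : p ≤ D / 2 + 2)
    (hper : PeriodOn f (D + 2) p)
    (hmin : ∀ m, 0 < m → PeriodOn f (D + 2) m → p ≤ m)
    (hq0 : 0 < q) (hqp : q < p) (hq : PeriodOn f (D + 1) q) : False := by
  by_cases hcase : q + p ≤ D + 1
  · -- extend q to a full period, contradiction with minimality
    have hfull : PeriodOn f (D + 2) q := by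
      intro j hj
      by_cases h1 : j + q < D + 1
      · exact hq j h1
      · have hj0 : j = D + 1 - q := by omega
        have e1 : f (j - p) = f j := by
          have := hper (j - p) (by omega)
          rwa [show j - p + p = j by omega] at this
        have e2 : f (j - p) = f (j - p + q) := hq (j - p) (by omega)
        have e3 : f (j - p + q) = f (j + q) := by
          have := hper (j - p + q) (by omega)
          rwa [show j - p + q + p = j + q by omega] at this
        rw [← e1, e2, e3]
    exact absurd (hmin q hq0 hfull) (by omega)
  · have hq1 : q = p - 1 ∨ (q = p - 2 ∧ D = 2 * q) := by omega
    rcases hq1 with h1 | ⟨h1, hD2⟩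
    · -- q = p - 1
      have e0 : f 0 = f q := by
        have := hq 0 (by omega)
        simpa using this
      have e1 : f 0 = f p := by
        have := hper 0 (by omega)
        simpa using this
      apply hKautz (p - 1) (by omega)
      rw [show p - 1 + 1 = p by omega, show p - 1 = q by omega, ← e0, e1]
    · -- q = p - 2, D = 2q
      have OD : ∀ t, 2 * t + 1 ≤ q → f (2 * t + 1) = f 1 := by
        intro t
        induction t with
        | zero => intro _; norm_num
        | succ t ih =>
          intro h
          have l1 : f (2 * t + 3) = f (2 * t + 3 + q) := hq (2 * t + 3) (by omega)
          have l2 : f (2 * t + 1) = f (2 * t + 1 + p) := hper (2 * t + 1) (by omega)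
          have l3 : 2 * t + 3 + q = 2 * t + 1 + p := by omega
          have : f (2 * t + 3) = f (2 * t + 1) := by rw [l1, l3, ← l2]
          rw [show 2 * (t + 1) + 1 = 2 * t + 3 by ring, this]
          exact ih (by omega)
      rcases Nat.even_or_odd q with hqe | hqo
      · -- q even
        obtain ⟨s, hs⟩ := hqe
        have EV : ∀ t, 2 * t ≤ q → f (2 * t) = f 0 := by
          intro t
          induction t with
          | zero => intro _; norm_num
          | succ t ih =>
            intro h
            have l1 : f (2 * t + 2) = f (2 * t + 2 + q) := hq (2 * t + 2) (by omega)
            have l2 : f (2 * t) = f (2 * t + p) := hper (2 * t) (by omega)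
            have l3 : 2 * t + 2 + q = 2 * t + p := by omega
            have : f (2 * t + 2) = f (2 * t) := by rw [l1, l3, ← l2]
            rw [show 2 * (t + 1) = 2 * t + 2 by ring, this]
            exact ih (by omega)
        have CL : ∀ t, t < p → f t = f (t % 2) := by
          intro t ht
          rcases Nat.even_or_odd t with ⟨s', hs'⟩ | ⟨s', hs'⟩
          · have htq : t ≤ q := by omega
            have := EV s' (by omega)
            rw [show t = 2 * s' by omega, this, show 2 * s' % 2 = 0 by omega]
          · by_cases h2 : t ≤ q
            · have := OD s' (by omega)
              rw [show t = 2 * s' + 1 by omega, this, show (2 * s' + 1) % 2 = 1 by omega]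
            · have htq : t = q + 1 := by omega
              have l1 : f 1 = f (1 + q) := hq 1 (by omega)
              rw [htq, show (q + 1) % 2 = 1 by omega, show q + 1 = 1 + q by ring, ← l1]
        have hper2 : PeriodOn f (D + 2) 2 := by
          intro j hj
          have h2p : 2 ∣ p := ⟨s + 1, by omega⟩
          have m1 : f j = f (j % p) := periodOn_mod (by omega) hper j (by omega)
          have m2 : f (j + 2) = f ((j + 2) % p) := periodOn_mod (by omega) hper (j + 2) (by omega)
          rw [m1, m2, CL (j % p) (Nat.mod_lt _ (by omega)), CL ((j + 2) % p) (Nat.mod_lt _ (by omega))]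
          rw [Nat.mod_mod_of_dvd j h2p, Nat.mod_mod_of_dvd (j + 2) h2p, Nat.add_mod_right]
        have := hmin 2 (by omega) hper2
        omega
      · -- q odd
        obtain ⟨s, hs⟩ := hqo
        have e0 : f 0 = f q := by
          have := hq 0 (by omega)
          simpa using this
        have e1 : f q = f 1 := by
          have := OD s (by omega)
          rwa [show 2 * s + 1 = q by omega] at this
        exact hKautz 0 (by omega) (e0.trans e1)

lemma minper_trunc {D p : ℕ} {f : ℕ → Fin (d + 1)} (hD : 2 ≤ D)
    (hKautz : ∀ j, j + 1 < D + 2 → f j ≠ f (j + 1))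
    (hpD : p ≤ D / 2 + 2)
    (h : minperOn f (D + 2) = p) : minperOn f (D + 1) = p := by
  obtain ⟨hp0, hper⟩ := minper_spec f (D + 2) (by omega)
  rw [h] at hp0 hper
  have hp2 : 2 ≤ p := by
    by_contra hc
    have hp1 : p = 1 := by omega
    have := hper 0 (by omega)
    rw [hp1] at this
    exact hKautz 0 (by omega) (by simpa using this)
  apply minper_eq f (by omega) (by omega)
  · intro j hj
    exact hper j (by omega)
  · intro q hq0 hqp hqper
    exact trunc_no_smaller_period hD hKautz hp2 hpD hper
      (fun m hm hmper => h ▸ minper_le f hm hmper) hq0 hqp hqper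


lemma cycleLen_iff_special (u v : KautzVertex d 1) (huv : KautzAdj d 1 u v) :
    cycleLen (KautzAdj d 1) u v = 3 ↔ minperOn (edgeWord d 1 u v) 3 = 3 := by
  set a := edgeWord d 1 u v with ha
  have k01 : a 0 ≠ a 1 := by
    have := kautzOn_edgeWord (le_refl 1) huv 0 (by omega)
    simpa using this
  have k12 : a 1 ≠ a 2 := by
    have := kautzOn_edgeWord (le_refl 1) huv 1 (by omega)
    simpa using this
  have hu0 : u.1 ⟨0, by omega⟩ = a 0 := (edgeWord_lt u v (by omega)).symm
  have hv0 : v.1 ⟨0, by omega⟩ = a 1 := by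
    have := edgeWord_succ (j := 0) huv (by omega)
    simpa using this.symm
  have hv1 : v.1 ⟨1, by omega⟩ = a 2 := by
    have := edgeWord_succ (j := 1) huv (by omega)
    simpa using this.symm
  have b1 : minperOn a 3 = 3 ↔ a 0 ≠ a 2 := by
    constructor
    · intro h hne
      have hper2 : PeriodOn a 3 2 := by
        intro j hj
        have hj0 : j = 0 := by omega
        subst hj0
        simpa using hne
      have := minper_le a (by omega) hper2
      omega
    · intro hne
      apply minper_eq a (by omega) (by omega) (periodOn_self a 3)
      intro q hq0 hq3 hqper
      interval_cases q
      · exact k01 (by simpa using hqper 0 (by omega))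
      · exact hne (by simpa using hqper 0 (by omega))
  rw [b1]
  have hne_uv : u ≠ v := by
    intro he
    apply k01
    rw [← hu0, ← hv0, he]
  constructor
  · intro h
    intro hcc
    have hvu : KautzAdj d 1 v u := by
      intro i
      have hi : i = ⟨0, by omega⟩ := by
        apply Fin.ext
        have := i.isLt
        omega
      subst hi
      show u.1 ⟨0, by omega⟩ = v.1 ⟨1, by omega⟩
      rw [hu0, hv1, hcc]
    have h01 : ∀ x : ZMod 2, x = 0 ∨ x = 1 := by decide
    set c2 : ZMod 2 → KautzVertex d 1 := fun i => if i = 0 then u else v with hc2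
    have hc20 : c2 0 = u := if_pos rfl
    have hc21 : c2 1 = v := by
      show (if (1 : ZMod 2) = 0 then u else v) = v
      rw [if_neg (by decide)]
    have hadj2 : ∀ i, KautzAdj d 1 (c2 i) (c2 (i + 1)) := by
      intro i
      rcases h01 i with rfl | rfl
      · rw [show (0 : ZMod 2) + 1 = 1 by decide, hc20, hc21]
        exact huv
      · rw [show (1 : ZMod 2) + 1 = 0 by decide, hc20, hc21]
        exact hvu
    have hinj2 : Function.Injective c2 := by
      intro x y hxy
      rcases h01 x with rfl | rfl <;> rcases h01 y with rfl | rfl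
      · rfl
      · rw [hc20, hc21] at hxy; exact absurd hxy hne_uv
      · rw [hc20, hc21] at hxy; exact absurd hxy.symm hne_uv
      · rfl
    have hcyc2 : IsCycleThroughEdge (KautzAdj d 1) u v 2 :=
      ⟨by omega, c2, hinj2, hadj2, hc20, hc21⟩
    have hmem2 : (2 : ℕ) ∈ {L | IsCycleThroughEdge (KautzAdj d 1) u v L} := hcyc2
    have hle2 := Nat.sInf_le hmem2
    unfold cycleLen at h
    rw [h] at hle2
    omega
  · intro hne
    have pf : IsKautzWord d 2 (fun j : Fin 2 => if j.val = 0 then a 2 else a 0) := by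
      intro i hi
      have hi0 : i = 0 := by omega
      subst hi0
      simpa using fun h => hne h.symm
    set w2 : KautzVertex d 1 := ⟨fun j : Fin 2 => if j.val = 0 then a 2 else a 0, pf⟩ with hw2
    have hw20 : w2.1 ⟨0, by omega⟩ = a 2 := rfl
    have hw21 : w2.1 ⟨1, by omega⟩ = a 0 := rfl
    have htri : ∀ x : ZMod 3, x = 0 ∨ x = 1 ∨ x = 2 := by decide
    set c3 : ZMod 3 → KautzVertex d 1 :=
      fun i => if i = 0 then u else if i = 1 then v else w2 with hc3
    have hc30 : c3 0 = u := if_pos rfl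
    have hc31 : c3 1 = v := by
      show (if (1 : ZMod 3) = 0 then u else if (1 : ZMod 3) = 1 then v else w2) = v
      rw [if_neg (by decide), if_pos rfl]
    have hc32 : c3 2 = w2 := by
      show (if (2 : ZMod 3) = 0 then u else if (2 : ZMod 3) = 1 then v else w2) = w2
      rw [if_neg (by decide), if_neg (by decide)]
    have hvw2 : KautzAdj d 1 v w2 := by
      intro i
      have hi : i = ⟨0, by omega⟩ := by
        apply Fin.ext
        have := i.isLt
        omega
      subst hi
      show w2.1 ⟨0, by omega⟩ = v.1 ⟨1, by omega⟩
      rw [hw20, hv1]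
    have hw2u : KautzAdj d 1 w2 u := by
      intro i
      have hi : i = ⟨0, by omega⟩ := by
        apply Fin.ext
        have := i.isLt
        omega
      subst hi
      show u.1 ⟨0, by omega⟩ = w2.1 ⟨1, by omega⟩
      rw [hu0, hw21]
    have hadj3 : ∀ i, KautzAdj d 1 (c3 i) (c3 (i + 1)) := by
      intro i
      rcases htri i with rfl | rfl | rfl
      · rw [show (0 : ZMod 3) + 1 = 1 by decide, hc30, hc31]; exact huv
      · rw [show (1 : ZMod 3) + 1 = 2 by decide, hc31, hc32]; exact hvw2
      · rw [show (2 : ZMod 3) + 1 = 0 by decide, hc32, hc30]; exact hw2u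
    have l0 : ∀ {x y : KautzVertex d 1}, x = y → x.1 ⟨0, by omega⟩ = y.1 ⟨0, by omega⟩ := by
      intro x y h
      rw [h]
    have hne_uw : u ≠ w2 := by
      intro he
      apply hne
      rw [← hu0, ← hw20, he]
    have hne_vw : v ≠ w2 := by
      intro he
      apply k12
      rw [← hv0, ← hw20, he]
    have hinj3 : Function.Injective c3 := by
      intro x y hxy
      rcases htri x with rfl | rfl | rfl <;> rcases htri y with rfl | rfl | rfl
      · rfl
      · rw [hc30, hc31] at hxy; exact absurd hxy hne_uv
      · rw [hc30, hc32] at hxy; exact absurd hxy hne_uw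
      · rw [hc30, hc31] at hxy; exact absurd hxy.symm hne_uv
      · rfl
      · rw [hc31, hc32] at hxy; exact absurd hxy hne_vw
      · rw [hc30, hc32] at hxy; exact absurd hxy.symm hne_uw
      · rw [hc31, hc32] at hxy; exact absurd hxy.symm hne_vw
      · rfl
    have hcyc3 : IsCycleThroughEdge (KautzAdj d 1) u v 3 :=
      ⟨by omega, c3, hinj3, hadj3, hc30, hc31⟩
    have hSne : {L | IsCycleThroughEdge (KautzAdj d 1) u v L}.Nonempty := ⟨3, hcyc3⟩
    have hmem := Nat.sInf_mem hSne
    have hper := cycle_period hmem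
    have hpos := hmem.1
    have h3 : ¬ sInf {L | IsCycleThroughEdge (KautzAdj d 1) u v L} < 3 := by
      intro hlt
      have h12 : sInf {L | IsCycleThroughEdge (KautzAdj d 1) u v L} = 1 ∨
          sInf {L | IsCycleThroughEdge (KautzAdj d 1) u v L} = 2 := by omega
      rcases h12 with he | he
      · rw [he] at hper
        exact k01 (by simpa using hper 0 (by omega))
      · rw [he] at hper
        exact hne (by simpa using hper 0 (by omega))
    have hmem3 : (3 : ℕ) ∈ {L | IsCycleThroughEdge (KautzAdj d 1) u v L} := hcyc3
    have hle := Nat.sInf_le hmem3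
    unfold cycleLen
    exact le_antisymm hle (not_lt.mp h3)


def truncV {d D : ℕ} (w : KautzVertex d (D + 1)) : KautzVertex d D :=
  ⟨fun j => w.1 ⟨j.val, by have := j.isLt; omega⟩, by
    intro i h
    exact w.2 i (by omega)⟩

lemma truncAdj {D : ℕ} {u v : KautzVertex d (D + 1)} (huv : KautzAdj d (D + 1) u v) :
    KautzAdj d D (truncV u) (truncV v) := by
  intro i
  exact huv ⟨i.val, by have := i.isLt; omega⟩

lemma truncWord {D : ℕ} {u v : KautzVertex d (D + 1)} (huv : KautzAdj d (D + 1) u v) :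
    ∀ j, j < D + 2 → edgeWord d D (truncV u) (truncV v) j = edgeWord d (D + 1) u v j := by
  intro j hj
  by_cases h1 : j < D + 1
  · rw [edgeWord_lt (truncV u) (truncV v) h1, edgeWord_lt u v (by omega)]
    rfl
  · have hj1 : j = D + 1 := by omega
    subst hj1
    rw [edgeWord_lt u v (by omega)]
    show (if h : D + 1 < D + 1 then (truncV u).1 ⟨D + 1, h⟩ else (truncV v).1 (Fin.last D)) = _
    rw [dif_neg (by omega)]
    exact huv ⟨D, by omega⟩

def extW (d E p : ℕ) (u v : KautzVertex d E) : ℕ → Fin (d + 1) :=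
  fun j => if j < E + 2 then edgeWord d E u v j else edgeWord d E u v (j - p)

lemma extW_lt {E p : ℕ} (u v : KautzVertex d E) {j : ℕ} (h : j < E + 2) :
    extW d E p u v j = edgeWord d E u v j := if_pos h

lemma extW_top {E p : ℕ} (u v : KautzVertex d E) :
    extW d E p u v (E + 2) = edgeWord d E u v (E + 2 - p) := if_neg (by omega)

lemma extW_kautz {E p : ℕ} (hE : 1 ≤ E) (hp2 : 2 ≤ p) (hpE : p ≤ E + 2)
    {u v : KautzVertex d E} (huv : KautzAdj d E u v)
    (hm : minperOn (edgeWord d E u v) (E + 2) = p) :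
    ∀ j, j + 1 < E + 3 → extW d E p u v j ≠ extW d E p u v (j + 1) := by
  have hper := (minper_spec (edgeWord d E u v) (E + 2) (by omega)).2
  rw [hm] at hper
  intro j hj
  by_cases h1 : j + 1 < E + 2
  · rw [extW_lt u v (by omega), extW_lt u v h1]
    exact kautzOn_edgeWord hE huv j (by omega)
  · have hj1 : j = E + 1 := by omega
    subst hj1
    rw [extW_lt u v (by omega), show E + 1 + 1 = E + 2 from rfl, extW_top u v]
    by_cases h2 : p ≤ E + 1
    · have e1 : edgeWord d E u v (E + 1 - p) = edgeWord d E u v (E + 1) := by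
        have := hper (E + 1 - p) (by omega)
        rwa [show E + 1 - p + p = E + 1 by omega] at this
      rw [← e1]
      have := kautzOn_edgeWord hE huv (E + 1 - p) (by omega)
      rwa [show E + 1 - p + 1 = E + 2 - p by omega] at this
    · have hpe : p = E + 2 := by omega
      subst hpe
      rw [show E + 2 - (E + 2) = 0 by omega]
      intro hcon
      have hperE : PeriodOn (edgeWord d E u v) (E + 2) (E + 1) := by
        intro j2 hj2
        have hj20 : j2 = 0 := by omega
        subst hj20
        simpa using hcon.symm
      have := minper_le (edgeWord d E u v) (by omega) hperE
      omega

lemma rho_step (d E k : ℕ) (hE : 1 ≤ E) (hk1 : 1 ≤ k)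
    (hkhalf : k + 1 ≤ (E + 1) / 2 + 2) (hkE : k + 1 ≤ E + 2) :
    rho d (E + 1) k = rho d E k := by
  set p := k + 1 with hpdef
  have hp2 : 2 ≤ p := by omega
  have hpE : p ≤ E + 2 := hkE
  have charDown : ∀ (u v : KautzVertex d E), KautzAdj d E u v →
      (cycleLen (KautzAdj d E) u v = p ↔ minperOn (edgeWord d E u v) (E + 2) = p) := by
    intro u v huv
    by_cases h : p ≤ E + 1
    · exact cycleLen_eq_iff hE huv (by omega) h
    · have hE1 : E = 1 := by omega
      have hp3 : p = 3 := by omega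
      subst hE1
      rw [hp3]
      exact cycleLen_iff_special u v huv
  have charUp : ∀ (u v : KautzVertex d (E + 1)), KautzAdj d (E + 1) u v →
      (cycleLen (KautzAdj d (E + 1)) u v = p ↔
        minperOn (edgeWord d (E + 1) u v) (E + 1 + 2) = p) := by
    intro u v huv
    exact cycleLen_eq_iff (by omega) huv (by omega) (by omega)
  apply Nat.card_congr
  refine Equiv.ofBijective (fun x => ⟨(truncV x.1.1, truncV x.1.2), truncAdj x.2.1, ?_⟩)
    ⟨?_, ?_⟩
  · -- cycleLen of truncated pair
    obtain ⟨⟨u, v⟩, hadj, hcl⟩ := x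
    have hU : minperOn (edgeWord d (E + 1) u v) (E + 1 + 2) = p := (charUp u v hadj).mp hcl
    have hT : minperOn (edgeWord d (E + 1) u v) (E + 1 + 1) = p :=
      minper_trunc (by omega) (kautzOn_edgeWord (by omega) hadj) (by omega) hU
    apply (charDown _ _ (truncAdj hadj)).mpr
    rw [minper_congr (truncWord hadj)]
    exact hT
  · -- injective
    intro x y hxy
    obtain ⟨⟨u1, v1⟩, hadj1, hcl1⟩ := x
    obtain ⟨⟨u2, v2⟩, hadj2, hcl2⟩ := y
    have h1 := congrArg (fun z => z.1) hxy
    have h1a : truncV u1 = truncV u2 := congrArg Prod.fst h1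
    have h1b : truncV v1 = truncV v2 := congrArg Prod.snd h1
    have hU1 : minperOn (edgeWord d (E + 1) u1 v1) (E + 1 + 2) = p := (charUp u1 v1 hadj1).mp hcl1
    have hU2 : minperOn (edgeWord d (E + 1) u2 v2) (E + 1 + 2) = p := (charUp u2 v2 hadj2).mp hcl2
    have hper1 := (minper_spec (edgeWord d (E + 1) u1 v1) (E + 1 + 2) (by omega)).2
    rw [hU1] at hper1
    have hper2 := (minper_spec (edgeWord d (E + 1) u2 v2) (E + 1 + 2) (by omega)).2
    rw [hU2] at hper2
    have hwords : ∀ j, j < E + 3 → edgeWord d (E + 1) u1 v1 j = edgeWord d (E + 1) u2 v2 j := by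
      have hlow : ∀ j, j < E + 2 →
          edgeWord d (E + 1) u1 v1 j = edgeWord d (E + 1) u2 v2 j := by
        intro j hj
        rw [← truncWord hadj1 j hj, ← truncWord hadj2 j hj, h1a, h1b]
      intro j hj
      by_cases h2 : j < E + 2
      · exact hlow j h2
      · have hj2 : j = E + 2 := by omega
        subst hj2
        have e1 := hper1 (E + 2 - p) (by omega)
        have e2 := hper2 (E + 2 - p) (by omega)
        rw [show E + 2 - p + p = E + 2 by omega] at e1 e2
        rw [← e1, ← e2]
        exact hlow (E + 2 - p) (by omega)
    apply Subtype.ext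
    apply Prod.ext
    · apply Subtype.ext
      funext j
      have e1 : u1.1 j = edgeWord d (E + 1) u1 v1 j.val := (edgeWord_lt u1 v1 j.isLt).symm
      have e2 : u2.1 j = edgeWord d (E + 1) u2 v2 j.val := (edgeWord_lt u2 v2 j.isLt).symm
      rw [e1, e2, hwords j.val (by have := j.isLt; omega)]
    · apply Subtype.ext
      funext j
      have e1 : v1.1 j = edgeWord d (E + 1) u1 v1 (j.val + 1) := (edgeWord_succ hadj1 j.isLt).symm
      have e2 : v2.1 j = edgeWord d (E + 1) u2 v2 (j.val + 1) := (edgeWord_succ hadj2 j.isLt).symm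
      rw [e1, e2, hwords (j.val + 1) (by have := j.isLt; omega)]
  · -- surjective
    intro y
    obtain ⟨⟨u', v'⟩, hadj', hcl'⟩ := y
    have hm' : minperOn (edgeWord d E u' v') (E + 2) = p := (charDown u' v' hadj').mp hcl'
    have hper' := (minper_spec (edgeWord d E u' v') (E + 2) (by omega)).2
    rw [hm'] at hper'
    have hK := extW_kautz hE hp2 hpE hadj' hm'
    have pfU : IsKautzWord d (E + 1 + 1) (fun j : Fin (E + 1 + 1) => extW d E p u' v' j.val) := by
      intro i h
      exact hK i (by omega)
    have pfV : IsKautzWord d (E + 1 + 1)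
        (fun j : Fin (E + 1 + 1) => extW d E p u' v' (j.val + 1)) := by
      intro i h
      exact hK (i + 1) (by omega)
    set uU : KautzVertex d (E + 1) := ⟨fun j => extW d E p u' v' j.val, pfU⟩ with huU
    set vU : KautzVertex d (E + 1) := ⟨fun j => extW d E p u' v' (j.val + 1), pfV⟩ with hvU
    have hadjU : KautzAdj d (E + 1) uU vU := fun i => rfl
    have LaU : ∀ j, j < E + 3 → edgeWord d (E + 1) uU vU j = extW d E p u' v' j := by
      intro j hj
      by_cases h1 : j < E + 2
      · rw [edgeWord_lt uU vU h1]
      · have hj2 : j = E + 2 := by omega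
        subst hj2
        show (if h : E + 2 < E + 1 + 1 then uU.1 ⟨E + 2, h⟩ else vU.1 (Fin.last (E + 1))) = _
        rw [dif_neg (by omega)]
        rfl
    have hmU : minperOn (edgeWord d (E + 1) uU vU) (E + 1 + 2) = p := by
      apply minper_eq _ (by omega) (by omega)
      · intro j hj
        rw [LaU j (by omega), LaU (j + p) (by omega)]
        by_cases h1 : j + p < E + 2
        · rw [extW_lt u' v' (by omega), extW_lt u' v' h1]
          exact hper' j (by omega)
        · have hj2 : j + p = E + 2 := by omega
          rw [extW_lt u' v' (by omega), hj2, extW_top u' v', show E + 2 - p = j by omega]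
      · intro q hq0 hqp hqper
        have hq' : PeriodOn (edgeWord d E u' v') (E + 2) q := by
          intro j hj
          have e := hqper j (by omega)
          rwa [LaU j (by omega), LaU (j + q) (by omega), extW_lt u' v' (by omega),
            extW_lt u' v' hj] at e
        have := minper_le (edgeWord d E u' v') hq0 hq'
        omega
    refine ⟨⟨(uU, vU), hadjU, (charUp uU vU hadjU).mpr hmU⟩, ?_⟩
    apply Subtype.ext
    apply Prod.ext
    · apply Subtype.ext
      funext j
      show extW d E p u' v' j.val = u'.1 j
      rw [extW_lt u' v' (by have := j.isLt; omega)]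
      exact edgeWord_lt u' v' j.isLt
    · apply Subtype.ext
      funext j
      show extW d E p u' v' (j.val + 1) = v'.1 j
      rw [extW_lt u' v' (by have := j.isLt; omega)]
      exact edgeWord_succ hadj' j.isLt

end KP

/-- For `d ≥ 2`, `D ≥ 2` and every `k` with `1 ≤ k < ⌊D/2⌋ + 2`,
`Δ_k(d, D) = 0`; that is, `ρ_k(d, D) = ρ_k(d, D−1)`. -/


theorem delta_vanishes (d D k : ℕ) (hd : 2 ≤ d) (hD : 2 ≤ D)
    (hk1 : 1 ≤ k) (hk : k < D / 2 + 2) :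
    rho d D k = rho d (D - 1) k := by
  obtain ⟨E, rfl⟩ : ∃ E, D = E + 1 := ⟨D - 1, by omega⟩
  rw [Nat.add_sub_cancel]
  exact KP.rho_step d E k (by omega) hk1 (by omega) (by omega)
end

section
/- Fix d ≥ 2 and D ≥ 2. For every k with ⌊D/2⌋ + 2 ≤ k ≤ D − 1, one has Δ_k(d, D) ≥ 0; that is, ρ_k(d, D) ≥ ρ_k(d, D−1): the number of edges whose shortest directed cycle has length k+1 does not decrease in passing from K(d, D−1) to K(d, D). -/
namespace KautzAux

variable {d : ℕ}

/-- `p` is a period of the sequence `s`. -/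
def Per (s : ℕ → Fin (d + 1)) (p : ℕ) : Prop := ∀ n, s (n + p) = s n

lemma per_mul {s : ℕ → Fin (d + 1)} {p : ℕ} (h : Per s p) :
    ∀ (t n : ℕ), s (n + t * p) = s n := by
  intro t
  induction t with
  | zero => intro n; simp
  | succ t ih =>
      intro n
      have e : n + (t + 1) * p = (n + t * p) + p := by ring
      rw [e, h, ih]

lemma per_shift {s : ℕ → Fin (d + 1)} {p : ℕ} (h : Per s p) (x y : ℕ) :
    s (x % p + y) = s (x + y) := by
  conv_rhs => rw [← Nat.mod_add_div x p]
  have e : x % p + p * (x / p) + y = (x % p + y) + (x / p) * p := by ring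
  rw [e, per_mul h]

lemma per_mod {s : ℕ → Fin (d + 1)} {p : ℕ} (h : Per s p) (n : ℕ) :
    s n = s (n % p) := by
  have := per_shift h n 0
  simpa using this.symm

lemma kautz_of_per {s : ℕ → Fin (d + 1)} {p : ℕ} (hp : 0 < p) (h : Per s p)
    (hw : ∀ j, j < p → s j ≠ s (j + 1)) : ∀ n, s n ≠ s (n + 1) := by
  intro n
  have h1 : s n = s (n % p) := by simpa using (per_shift h n 0).symm
  have h2 : s (n + 1) = s (n % p + 1) := (per_shift h n 1).symm
  rw [h1, h2]
  exact hw (n % p) (Nat.mod_lt _ hp)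

/-- Window of length `E+1` at position `a` of a Kautz sequence. -/
def window (E : ℕ) (s : ℕ → Fin (d + 1)) (hs : ∀ n, s n ≠ s (n + 1)) (a : ℕ) :
    KautzVertex d E :=
  ⟨fun j => s (a + j.val), by
    intro i h
    exact hs (a + i)⟩

lemma cycle_of_periodic {E : ℕ} (s : ℕ → Fin (d + 1)) (hs : ∀ n, s n ≠ s (n + 1))
    (p : ℕ) (hp2 : 2 ≤ p) (hpE : p ≤ E + 1) (hper : Per s p)
    (hmin : ∀ q, 0 < q → Per s q → p ≤ q) :
    IsCycleThroughEdge (KautzAdj d E) (window E s hs 0) (window E s hs 1) p := by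
  haveI : NeZero p := ⟨by omega⟩
  haveI : Fact (1 < p) := ⟨by omega⟩
  refine ⟨by omega, fun i => window E s hs i.val, ?_, ?_, ?_, ?_⟩
  · -- injectivity
    intro i j hij
    have h1 : ∀ t : Fin (E + 1), s (i.val + t.val) = s (j.val + t.val) :=
      fun t => congrFun (congrArg Subtype.val hij) t
    have h2 : ∀ t : ℕ, s (i.val + t) = s (j.val + t) := by
      intro t
      have ht : t % p < E + 1 := lt_of_lt_of_le (Nat.mod_lt _ (by omega)) hpE
      have e1 : s (i.val + t) = s (i.val + t % p) := by
        rw [Nat.add_comm i.val t, Nat.add_comm i.val (t % p), per_shift hper]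
      have e2 : s (j.val + t) = s (j.val + t % p) := by
        rw [Nat.add_comm j.val t, Nat.add_comm j.val (t % p), per_shift hper]
      rw [e1, e2]
      exact h1 ⟨t % p, ht⟩
    -- from shift agreement derive a period
    have key : ∀ a b : ℕ, a ≤ b → (∀ t : ℕ, s (a + t) = s (b + t)) → Per s (b - a) := by
      intro a b hab hagree n
      have e1 : a + (n + a * (p - 1)) = n + a * p := by
        have : a + a * (p - 1) = a * p := by
          cases p with
          | zero => omega
          | succ q =>
              show a + a * q = a * (q + 1)
              ring
        omega
      have e2 : b + (n + a * (p - 1)) = (n + (b - a)) + a * p := by omega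
      have := hagree (n + a * (p - 1))
      rw [e1, e2, per_mul hper, per_mul hper] at this
      exact this.symm
    have hvi := ZMod.val_lt i
    have hvj := ZMod.val_lt j
    rcases Nat.le_total i.val j.val with hle | hle
    · have hper' := key i.val j.val hle h2
      have : j.val - i.val = 0 := by
        by_contra hne
        have := hmin _ (Nat.pos_of_ne_zero hne) hper'
        omega
      exact ZMod.val_injective p (by omega)
    · have hper' := key j.val i.val hle (fun t => (h2 t).symm)
      have : i.val - j.val = 0 := by
        by_contra hne
        have := hmin _ (Nat.pos_of_ne_zero hne) hper'
        omega
      exact ZMod.val_injective p (by omega)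
  · -- adjacency
    intro i j
    show s ((i + 1).val + j.val) = s (i.val + (j.val + 1))
    have e : (i + 1).val = (i.val + 1) % p := by
      rw [ZMod.val_add, ZMod.val_one]
    rw [e, per_shift hper (i.val + 1) j.val]
    exact congrArg s (by omega)
  · exact congrArg (window E s hs) (ZMod.val_zero)
  · exact congrArg (window E s hs) (ZMod.val_one p)


lemma periodic_of_cycle {E : ℕ} {u v : KautzVertex d E} {L : ℕ}
    (h : IsCycleThroughEdge (KautzAdj d E) u v L) :
    ∃ s : ℕ → Fin (d + 1), Per s L ∧
      (∀ j : Fin (E + 1), u.1 j = s j.val) ∧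
      (∀ j : Fin (E + 1), v.1 j = s (j.val + 1)) := by
  obtain ⟨hL0, c, hinj, hadj, hc0, hc1⟩ := h
  haveI : NeZero L := ⟨by omega⟩
  have claim : ∀ (j : ℕ) (hj : j < E + 1) (i : ZMod L),
      (c i).1 ⟨j, hj⟩ = (c (i + (j : ℕ))).1 ⟨0, Nat.succ_pos E⟩ := by
    intro j
    induction j with
    | zero => intro hj i; simp
    | succ j ih =>
        intro hj i
        have e1 : (c i).1 ⟨j + 1, hj⟩ = (c (i + 1)).1 ⟨j, by omega⟩ :=
          (hadj i ⟨j, by omega⟩).symm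
        have e2 : (i + 1) + ((j : ℕ) : ZMod L) = i + (((j + 1 : ℕ) : ℕ) : ZMod L) := by
          push_cast
          ring
        rw [e1, ih (by omega) (i + 1), e2]
  refine ⟨fun n => (c (n : ZMod L)).1 ⟨0, Nat.succ_pos E⟩, ?_, ?_, ?_⟩
  · intro n
    have e : ((n + L : ℕ) : ZMod L) = ((n : ℕ) : ZMod L) := by
      push_cast
      simp
    show (c ((n + L : ℕ) : ZMod L)).1 _ = _
    rw [e]
  · intro j
    have h0 := claim j.val j.isLt 0
    rw [hc0, zero_add] at h0
    exact h0
  · intro j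
    have h1 := claim j.val j.isLt 1
    have e : (1 : ZMod L) + ((j.val : ℕ) : ZMod L) = (((j.val + 1 : ℕ) : ℕ) : ZMod L) := by
      push_cast
      ring
    rw [hc1, e] at h1
    exact h1

lemma exists_seq {e k : ℕ} (hk1 : 1 ≤ k) (hk2 : k ≤ e + 1)
    {u v : KautzVertex d (e + 1)}
    (hcl : cycleLen (KautzAdj d (e + 1)) u v = k + 1) :
    ∃ s : ℕ → Fin (d + 1), (∀ n, s n ≠ s (n + 1)) ∧ Per s (k + 1) ∧
      (∀ q, 0 < q → Per s q → k + 1 ≤ q) ∧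
      (∀ j : Fin (e + 2), u.1 j = s j.val) ∧
      (∀ j : Fin (e + 2), v.1 j = s (j.val + 1)) := by
  have hne : {L | IsCycleThroughEdge (KautzAdj d (e + 1)) u v L}.Nonempty := by
    by_contra hn
    rw [Set.not_nonempty_iff_eq_empty] at hn
    have h0 : cycleLen (KautzAdj d (e + 1)) u v = 0 := by
      unfold cycleLen
      rw [hn, Nat.sInf_empty]
    omega
  have hmem : IsCycleThroughEdge (KautzAdj d (e + 1)) u v (k + 1) := by
    have h1 := Nat.sInf_mem hne
    rwa [show sInf {L | IsCycleThroughEdge (KautzAdj d (e + 1)) u v L} = k + 1 from hcl] at h1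
  obtain ⟨s, hper, hu, hv⟩ := periodic_of_cycle hmem
  have hsK : ∀ n, s n ≠ s (n + 1) := by
    apply kautz_of_per (by omega) hper
    intro j hj
    rcases Nat.lt_or_ge j (e + 1) with hje | hje
    · have g1 := hu ⟨j, by omega⟩
      have g2 := hu ⟨j + 1, by omega⟩
      rw [← g1, ← g2]
      exact u.2 j (by omega)
    · have hj' : j = e + 1 := by omega
      subst hj'
      have g1 := hv ⟨e, by omega⟩
      have g2 := hv ⟨e + 1, by omega⟩
      rw [← g1, ← g2]
      exact v.2 e (by omega)
  refine ⟨s, hsK, hper, ?_, hu, hv⟩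
  intro q hq0 hqper
  by_contra hlt
  push_neg at hlt
  have hPne : {r | 0 < r ∧ Per s r}.Nonempty := ⟨q, hq0, hqper⟩
  obtain ⟨hp0pos, hp0per⟩ := Nat.sInf_mem hPne
  have hp0le : sInf {r | 0 < r ∧ Per s r} ≤ q := Nat.sInf_le ⟨hq0, hqper⟩
  have hp0two : 2 ≤ sInf {r | 0 < r ∧ Per s r} := by
    by_contra h2
    have hp1 : sInf {r | 0 < r ∧ Per s r} = 1 := by omega
    have h01 := hp0per 0
    rw [hp1, Nat.zero_add] at h01
    exact hsK 0 h01.symm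
  have hcyc := cycle_of_periodic (E := e + 1) s hsK (sInf {r | 0 < r ∧ Per s r})
      hp0two (by omega) hp0per (fun r hr hper' => Nat.sInf_le ⟨hr, hper'⟩)
  have hwu : window (e + 1) s hsK 0 = u := by
    apply Subtype.ext
    funext j
    show s (0 + j.val) = u.1 j
    rw [hu j]
    exact congrArg s (by omega)
  have hwv : window (e + 1) s hsK 1 = v := by
    apply Subtype.ext
    funext j
    show s (1 + j.val) = v.1 j
    rw [hv j]
    exact congrArg s (by omega)
  have hsource : cycleLen (KautzAdj d (e + 1)) u v ≤ sInf {r | 0 < r ∧ Per s r} := by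
    apply Nat.sInf_le
    rw [← hwu, ← hwv]
    exact hcyc
  rw [hcl] at hsource
  omega

lemma key {e k : ℕ} (hk1 : 1 ≤ k) (hk2 : k ≤ e + 1)
    (u v : KautzVertex d (e + 1))
    (hcl : cycleLen (KautzAdj d (e + 1)) u v = k + 1) :
    ∃ u' v' : KautzVertex d (e + 2),
      KautzAdj d (e + 2) u' v' ∧ cycleLen (KautzAdj d (e + 2)) u' v' = k + 1 ∧
      (∀ j : Fin (e + 2), u.1 j = u'.1 ⟨j.val, by omega⟩) ∧
      (∀ j : Fin (e + 2), v.1 j = v'.1 ⟨j.val, by omega⟩) := by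
  obtain ⟨s, hsK, hper, hmin, hu, hv⟩ := exists_seq hk1 hk2 hcl
  refine ⟨window (e + 2) s hsK 0, window (e + 2) s hsK 1, ?_, ?_, ?_, ?_⟩
  · intro i
    show s (1 + i.val) = s (0 + (i.val + 1))
    exact congrArg s (by omega)
  · have hmem := cycle_of_periodic (E := e + 2) s hsK (k + 1) (by omega) (by omega) hper hmin
    have hle : cycleLen (KautzAdj d (e + 2)) (window (e + 2) s hsK 0) (window (e + 2) s hsK 1) ≤ k + 1 :=
      Nat.sInf_le hmem
    refine le_antisymm hle ?_
    by_contra hlt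
    push_neg at hlt
    have hm : IsCycleThroughEdge (KautzAdj d (e + 2)) (window (e + 2) s hsK 0)
        (window (e + 2) s hsK 1)
        (cycleLen (KautzAdj d (e + 2)) (window (e + 2) s hsK 0) (window (e + 2) s hsK 1)) := by
      have hSne : Set.Nonempty {L | IsCycleThroughEdge (KautzAdj d (e + 2))
          (window (e + 2) s hsK 0) (window (e + 2) s hsK 1) L} := ⟨k + 1, hmem⟩
      exact Nat.sInf_mem hSne
    have hm0 : 0 < cycleLen (KautzAdj d (e + 2)) (window (e + 2) s hsK 0) (window (e + 2) s hsK 1) :=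
      hm.1
    obtain ⟨s₂, hper₂, hu₂, hv₂⟩ := periodic_of_cycle hm
    have hag : ∀ t, t ≤ e + 3 → s₂ t = s t := by
      intro t ht
      rcases Nat.lt_or_ge t (e + 3) with h | h
      · have g := hu₂ ⟨t, by omega⟩
        rw [← g]
        show s (0 + t) = s t
        exact congrArg s (by omega)
      · have ht' : t = e + 3 := by omega
        subst ht'
        have g := hv₂ ⟨e + 2, by omega⟩
        rw [← g]
        show s (1 + (e + 2)) = s (e + 3)
        exact congrArg s (by omega)
    have hP2ne : {r | 0 < r ∧ Per s₂ r}.Nonempty := ⟨_, hm0, hper₂⟩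
    obtain ⟨hp2pos, hp2per⟩ := Nat.sInf_mem hP2ne
    have hp2le : sInf {r | 0 < r ∧ Per s₂ r} ≤
        cycleLen (KautzAdj d (e + 2)) (window (e + 2) s hsK 0) (window (e + 2) s hsK 1) :=
      Nat.sInf_le ⟨hm0, hper₂⟩
    have hp2two : 2 ≤ sInf {r | 0 < r ∧ Per s₂ r} := by
      by_contra h2
      have hp1 : sInf {r | 0 < r ∧ Per s₂ r} = 1 := by omega
      have h01 := hp2per 0
      rw [hp1, Nat.zero_add] at h01
      rw [hag 0 (by omega), hag 1 (by omega)] at h01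
      exact hsK 0 h01.symm
    have hs2K : ∀ n, s₂ n ≠ s₂ (n + 1) := by
      apply kautz_of_per (by omega) hp2per
      intro j hj
      rw [hag j (by omega), hag (j + 1) (by omega)]
      exact hsK j
    have hcyc2 := cycle_of_periodic (E := e + 1) s₂ hs2K (sInf {r | 0 < r ∧ Per s₂ r})
        hp2two (by omega) hp2per (fun r hr hper' => Nat.sInf_le ⟨hr, hper'⟩)
    have hwu : window (e + 1) s₂ hs2K 0 = u := by
      apply Subtype.ext
      funext j
      show s₂ (0 + j.val) = u.1 j
      rw [hu j, Nat.zero_add]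
      exact hag j.val (by omega)
    have hwv : window (e + 1) s₂ hs2K 1 = v := by
      apply Subtype.ext
      funext j
      show s₂ (1 + j.val) = v.1 j
      rw [hv j, Nat.add_comm 1 j.val]
      exact hag (j.val + 1) (by omega)
    have hsource : cycleLen (KautzAdj d (e + 1)) u v ≤ sInf {r | 0 < r ∧ Per s₂ r} := by
      apply Nat.sInf_le
      rw [← hwu, ← hwv]
      exact hcyc2
    rw [hcl] at hsource
    omega
  · intro j
    show u.1 j = s (0 + j.val)
    rw [hu j]
    exact congrArg s (by omega)
  · intro j
    show v.1 j = s (1 + j.val)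
    rw [hv j]
    exact congrArg s (by omega)

end KautzAux

/-- For `d ≥ 2`, `D ≥ 2` and every `k` with
`⌊D/2⌋ + 2 ≤ k ≤ D − 1`, `Δ_k(d, D) ≥ 0`; that is, `ρ_k(d, D) ≥ ρ_k(d, D−1)`. -/
theorem delta_nonneg (d D k : ℕ) (hd : 2 ≤ d) (hD : 2 ≤ D)
    (hk1 : D / 2 + 2 ≤ k) (hk2 : k ≤ D - 1) :
    rho d (D - 1) k ≤ rho d D k := by
  obtain ⟨e, rfl⟩ : ∃ e, D = e + 2 := ⟨D - 2, by omega⟩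
  have hk1' : 1 ≤ k := by omega
  have hk2' : k ≤ e + 1 := by omega
  show Nat.card {p : KautzVertex d (e + 1) × KautzVertex d (e + 1) //
      KautzAdj d (e + 1) p.1 p.2 ∧ cycleLen (KautzAdj d (e + 1)) p.1 p.2 = k + 1} ≤
    Nat.card {p : KautzVertex d (e + 2) × KautzVertex d (e + 2) //
      KautzAdj d (e + 2) p.1 p.2 ∧ cycleLen (KautzAdj d (e + 2)) p.1 p.2 = k + 1}
  haveI : Finite (KautzVertex d (e + 2)) :=
    inferInstanceAs (Finite {w : Fin (e + 2 + 1) → Fin (d + 1) // IsKautzWord d (e + 2 + 1) w})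
  have main : ∀ x : {p : KautzVertex d (e + 1) × KautzVertex d (e + 1) //
      KautzAdj d (e + 1) p.1 p.2 ∧ cycleLen (KautzAdj d (e + 1)) p.1 p.2 = k + 1},
      ∃ y : {p : KautzVertex d (e + 2) × KautzVertex d (e + 2) //
      KautzAdj d (e + 2) p.1 p.2 ∧ cycleLen (KautzAdj d (e + 2)) p.1 p.2 = k + 1},
      (∀ j : Fin (e + 2), x.1.1.1 j = y.1.1.1 ⟨j.val, by omega⟩) ∧
      (∀ j : Fin (e + 2), x.1.2.1 j = y.1.2.1 ⟨j.val, by omega⟩) := by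
    rintro ⟨⟨u, v⟩, hadj, hcl⟩
    obtain ⟨u', v', ha, hc, h3, h4⟩ := KautzAux.key hk1' hk2' u v hcl
    exact ⟨⟨(u', v'), ha, hc⟩, h3, h4⟩
  choose f hfu hfv using main
  have hinj : Function.Injective f := by
    intro x y hxy
    have hu : x.1.1 = y.1.1 := by
      apply Subtype.ext
      funext j
      rw [hfu x j, hfu y j, hxy]
    have hv : x.1.2 = y.1.2 := by
      apply Subtype.ext
      funext j
      rw [hfv x j, hfv y j, hxy]
    exact Subtype.ext (Prod.ext hu hv)
  exact Nat.card_le_card_of_injective f hinj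
end

section
/- Let d ≥ 2, D ≥ 1, and let e = (u → v) be a directed edge of the Kautz digraph K(d, D). Let r be the largest t ∈ {0, …, D+1} such that the suffix of v of length t equals the prefix of u of length t. Then the shortest directed cycle of K(d, D) containing the edge e has length exactly D + 2 − r. -/
/-- The suffix of `v` of length `t` equals the prefix of `u` of length `t`
(for words of length `D+1`). -/
def Overlap (d D : ℕ) (u v : KautzVertex d D) (t : ℕ) : Prop :=
  ∃ _ : t ≤ D + 1, ∀ i (hi : i < t),
    v.1 ⟨D + 1 - t + i, by omega⟩ = u.1 ⟨i, by omega⟩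


section KautzAuxLemmas

lemma finmk {n : ℕ} (a b : ℕ) (ha : a < n) (hb : b < n) (h : a = b) :
    (⟨a, ha⟩ : Fin n) = ⟨b, hb⟩ := by subst h; rfl

lemma hasWalk_trans' {V : Type*} {Adj : V → V → Prop} :
    ∀ {a b : ℕ} {x y z : V}, HasWalk Adj a x y → HasWalk Adj b y z →
      HasWalk Adj (a + b) x z := by
  intro a
  induction a with
  | zero =>
    intro b x y z h1 h2
    have : x = y := h1
    subst this
    simpa using h2
  | succ n ih =>
    intro b x y z h1 h2
    obtain ⟨w, hw, h1'⟩ := h1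
    rw [Nat.add_right_comm]
    exact ⟨w, hw, ih h1' h2⟩

lemma cycle_walk' {V : Type*} {Adj : V → V → Prop} {L : ℕ} (c : ZMod L → V)
    (hadj : ∀ i, Adj (c i) (c (i + 1))) :
    ∀ (k : ℕ) (i : ZMod L), HasWalk Adj k (c i) (c (i + (k : ZMod L))) := by
  intro k
  induction k with
  | zero =>
    intro i
    have h0 : i + ((0 : ℕ) : ZMod L) = i := by rw [Nat.cast_zero, add_zero]
    rw [h0]
    exact rfl
  | succ n ih =>
    intro i
    refine ⟨c (i + 1), hadj i, ?_⟩
    have := ih (i + 1)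
    have he : i + 1 + (n : ZMod L) = i + ((n + 1 : ℕ) : ZMod L) := by
      push_cast; ring
    rwa [he] at this

/-- Along a walk of length `m` in the Kautz digraph, letters shift. -/
lemma kautz_walk_shift {d D : ℕ} :
    ∀ (m : ℕ) (x y : KautzVertex d D), HasWalk (KautzAdj d D) m x y →
      ∀ (i : ℕ) (h : m + i < D + 1), y.1 ⟨i, by omega⟩ = x.1 ⟨m + i, h⟩ := by
  intro m
  induction m with
  | zero =>
    intro x y hxy i h
    have : x = y := hxy
    subst this
    exact congrArg _ (finmk _ _ _ _ (by omega))
  | succ n ih =>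
    intro x y hxy i h
    obtain ⟨w, hw, hwalk⟩ := hxy
    have h1 : y.1 ⟨i, by omega⟩ = w.1 ⟨n + i, by omega⟩ := ih w y hwalk i (by omega)
    calc y.1 ⟨i, by omega⟩ = w.1 ⟨n + i, by omega⟩ := h1
      _ = w.1 (Fin.castSucc ⟨n + i, by omega⟩) :=
        congrArg _ (Fin.ext (by simp))
      _ = x.1 (Fin.succ (⟨n + i, by omega⟩ : Fin D)) := hw _
      _ = x.1 ⟨n + 1 + i, h⟩ :=
        congrArg _ (Fin.ext (by simp [Fin.val_succ]; omega))

/-- The word of the `k`-th vertex on the canonical walk from `v` back to `u`. -/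
def chainWord (d D m k : ℕ) (u v : KautzVertex d D) : Fin (D + 1) → Fin (d + 1) :=
  fun j => if h : k + j.val ≤ D then v.1 ⟨k + j.val, by omega⟩
    else u.1 ⟨min (k + j.val - m) D, by omega⟩

lemma chainWord_kautz (d D m k : ℕ) (u v : KautzVertex d D)
    (hm1 : 1 ≤ m) (hmD : m ≤ D + 1) (hk : k ≤ m)
    (hne : v.1 ⟨D, by omega⟩ ≠ u.1 ⟨D + 1 - m, by omega⟩) :
    IsKautzWord d (D + 1) (chainWord d D m k u v) := by
  intro i h
  unfold chainWord
  simp only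
  by_cases h1 : k + i ≤ D
  · by_cases h2 : k + (i + 1) ≤ D
    · rw [dif_pos h1, dif_pos h2]
      have hv := v.2 (k + i) (by omega)
      have e : (⟨k + (i + 1), by omega⟩ : Fin (D + 1)) = ⟨k + i + 1, by omega⟩ :=
        finmk _ _ _ _ (by omega)
      rw [e]
      exact hv
    · rw [dif_pos h1, dif_neg h2]
      have e1 : (⟨k + i, by omega⟩ : Fin (D + 1)) = ⟨D, by omega⟩ :=
        finmk _ _ _ _ (by omega)
      have e2 : (⟨min (k + (i + 1) - m) D, by omega⟩ : Fin (D + 1))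
          = ⟨D + 1 - m, by omega⟩ := finmk _ _ _ _ (by omega)
      rw [e1, e2]
      exact hne
  · rw [dif_neg h1, dif_neg (by omega : ¬ k + (i + 1) ≤ D)]
    have hu := u.2 (k + i - m) (by omega)
    have e1 : (⟨min (k + i - m) D, by omega⟩ : Fin (D + 1)) = ⟨k + i - m, by omega⟩ :=
      finmk _ _ _ _ (by omega)
    have e2 : (⟨min (k + (i + 1) - m) D, by omega⟩ : Fin (D + 1))
        = ⟨k + i - m + 1, by omega⟩ := finmk _ _ _ _ (by omega)
    rw [e1, e2]
    exact hu

lemma chainWord_adj (d D m k : ℕ) (u v : KautzVertex d D) :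
    ∀ i : Fin D, chainWord d D m (k + 1) u v i.castSucc = chainWord d D m k u v i.succ := by
  intro i
  unfold chainWord
  simp only [Fin.coe_castSucc, Fin.val_succ]
  by_cases h : k + 1 + i.val ≤ D
  · rw [dif_pos h, dif_pos (by omega : k + (i.val + 1) ≤ D)]
    exact congrArg _ (finmk _ _ _ _ (by omega))
  · rw [dif_neg h, dif_neg (by omega : ¬ k + (i.val + 1) ≤ D)]
    exact congrArg _ (finmk _ _ _ _ (by omega))

lemma chainWord_zero (d D m : ℕ) (u v : KautzVertex d D) :
    chainWord d D m 0 u v = v.1 := by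
  funext j
  unfold chainWord
  rw [dif_pos (by omega : 0 + j.val ≤ D)]
  exact congrArg _ (Fin.ext (by simp))

lemma chainWord_last (d D m r : ℕ) (u v : KautzVertex d D)
    (hrD : r ≤ D) (hm : m = D + 1 - r)
    (hov : ∀ i (hi : i < r), v.1 ⟨D + 1 - r + i, by omega⟩ = u.1 ⟨i, by omega⟩) :
    chainWord d D m m u v = u.1 := by
  funext j
  unfold chainWord
  by_cases h : m + j.val ≤ D
  · rw [dif_pos h]
    have hj : j.val < r := by omega
    have hh := hov j.val hj
    have e : (⟨m + j.val, by omega⟩ : Fin (D + 1)) = ⟨D + 1 - r + j.val, by omega⟩ :=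
      finmk _ _ _ _ (by omega)
    rw [e, hh]
  · rw [dif_neg h]
    have hjD := j.isLt
    exact congrArg _ (Fin.ext (show min (m + j.val - m) D = j.val by omega))

lemma mod_helper (x m : ℕ) (hx : x ≤ m) :
    (x + m) % (m + 1) = if x = 0 then m else x - 1 := by
  rcases Nat.eq_zero_or_pos x with h | h
  · subst h; simp [Nat.mod_eq_of_lt]
  · rw [if_neg (by omega)]
    have hxx : x + m = (m + 1) + (x - 1) := by omega
    rw [hxx, Nat.add_mod_left, Nat.mod_eq_of_lt (by omega)]

end KautzAuxLemmas

theorem cycleLen_eq_of_overlap' (d D : ℕ) (hd : 2 ≤ d) (hD : 1 ≤ D)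
    (u v : KautzVertex d D) (huv : KautzAdj d D u v) (r : ℕ)
    (hr : Overlap d D u v r) (hmax : ∀ t, Overlap d D u v t → t ≤ r) :
    cycleLen (KautzAdj d D) u v = D + 2 - r := by
  obtain ⟨hrD1, hov⟩ := hr
  -- r ≤ D
  have hrD : r ≤ D := by
    by_contra hc
    push_neg at hc
    have h00 := hov 0 (by omega)
    have h01 := huv ⟨0, by omega⟩
    have key : u.1 ⟨0, by omega⟩ = u.1 ⟨0 + 1, by omega⟩ := by
      calc u.1 ⟨0, by omega⟩ = v.1 ⟨D + 1 - r + 0, by omega⟩ := h00.symm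
        _ = v.1 (Fin.castSucc (⟨0, by omega⟩ : Fin D)) :=
          congrArg _ (Fin.ext (by simp; omega))
        _ = u.1 (Fin.succ (⟨0, by omega⟩ : Fin D)) := h01
        _ = u.1 ⟨0 + 1, by omega⟩ := congrArg _ (Fin.ext (by simp))
    exact u.2 0 (by omega) key
  set m := D + 1 - r with hmdef
  have hm1 : 1 ≤ m := by omega
  -- no walk from v back to u shorter than m
  have hB : ∀ m', m' < m → ¬ HasWalk (KautzAdj d D) m' v u := by
    intro m' hm' hw
    have ht : Overlap d D u v (D + 1 - m') := by
      refine ⟨by omega, fun i hi => ?_⟩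
      have hh := kautz_walk_shift m' v u hw i (by omega)
      exact (congrArg v.1 (finmk (D + 1 - (D + 1 - m') + i) (m' + i)
        (by omega) (by omega) (by omega))).trans hh.symm
    have := hmax _ ht
    omega
  -- the key letter inequality
  have hne : v.1 ⟨D, by omega⟩ ≠ u.1 ⟨D + 1 - m, by omega⟩ := by
    have hDm : D + 1 - m = r := by omega
    rcases Nat.eq_zero_or_pos r with h0 | hpos
    · intro heq
      have hov1 : Overlap d D u v 1 := by
        refine ⟨by omega, fun i hi => ?_⟩
        have hi0 : i = 0 := by omega
        subst hi0
        calc v.1 ⟨D + 1 - 1 + 0, by omega⟩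
            = v.1 ⟨D, by omega⟩ := congrArg _ (finmk _ _ _ _ (by omega))
          _ = u.1 ⟨D + 1 - m, by omega⟩ := heq
          _ = u.1 ⟨0, by omega⟩ := congrArg _ (finmk _ _ _ _ (by omega))
      have := hmax 1 hov1
      omega
    · have h1 := hov (r - 1) (by omega)
      intro heq
      apply u.2 (r - 1) (by omega)
      calc u.1 ⟨r - 1, by omega⟩
          = v.1 ⟨D + 1 - r + (r - 1), by omega⟩ := h1.symm
        _ = v.1 ⟨D, by omega⟩ := congrArg _ (finmk _ _ _ _ (by omega))
        _ = u.1 ⟨D + 1 - m, by omega⟩ := heq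
        _ = u.1 ⟨r - 1 + 1, by omega⟩ := congrArg _ (finmk _ _ _ _ (by omega))
  -- the chain of vertices
  set W : ℕ → KautzVertex d D := fun k =>
    ⟨chainWord d D m (min k m) u v,
      chainWord_kautz d D m (min k m) u v hm1 (by omega) (Nat.min_le_right _ _) hne⟩ with hWdef
  have hW0 : W 0 = v := by
    apply Subtype.ext
    show chainWord d D m (min 0 m) u v = v.1
    rw [Nat.zero_min]
    exact chainWord_zero d D m u v
  have hWm : W m = u := by
    apply Subtype.ext
    show chainWord d D m (min m m) u v = u.1
    rw [Nat.min_self]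
    exact chainWord_last d D m r u v hrD hmdef hov
  have hWadj : ∀ k, k < m → KautzAdj d D (W k) (W (k + 1)) := by
    intro k hk i
    show chainWord d D m (min (k + 1) m) u v i.castSucc
        = chainWord d D m (min k m) u v i.succ
    rw [Nat.min_eq_left (by omega), Nat.min_eq_left (by omega)]
    exact chainWord_adj d D m k u v i
  have hCW : ∀ (t a : ℕ), a + t ≤ m → HasWalk (KautzAdj d D) t (W a) (W (a + t)) := by
    intro t
    induction t with
    | zero => intro a ha; exact rfl
    | succ n ih =>
      intro a ha
      refine ⟨W (a + 1), hWadj a (by omega), ?_⟩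
      have := ih (a + 1) (by omega)
      rwa [show a + 1 + n = a + (n + 1) by omega] at this
  haveI : NeZero (m + 1) := ⟨Nat.succ_ne_zero m⟩
  -- membership : there is a cycle of length m+1
  have hmem : IsCycleThroughEdge (KautzAdj d D) u v (m + 1) := by
    refine ⟨by omega, fun i => W ((ZMod.val i + m) % (m + 1)), ?_, ?_, ?_, ?_⟩
    · -- injective
      intro i j hij
      simp only at hij
      have ha : (ZMod.val i + m) % (m + 1) ≤ m :=
        Nat.lt_succ_iff.mp (Nat.mod_lt _ (by omega))
      have hb : (ZMod.val j + m) % (m + 1) ≤ m :=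
        Nat.lt_succ_iff.mp (Nat.mod_lt _ (by omega))
      have key : ∀ a b : ℕ, a < b → b ≤ m → W a ≠ W b := by
        intro a b hab hbm heq
        have w1 : HasWalk (KautzAdj d D) a (W 0) (W a) := by
          have := hCW a 0 (by omega)
          simpa using this
        have w2 : HasWalk (KautzAdj d D) (m - b) (W b) (W m) := by
          have := hCW (m - b) b (by omega)
          rwa [show b + (m - b) = m by omega] at this
        have w3 : HasWalk (KautzAdj d D) (a + (m - b)) v u := by
          rw [← hW0, ← hWm]
          exact hasWalk_trans' (heq ▸ w1) w2
        exact hB _ (by omega) w3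
      have hab : (ZMod.val i + m) % (m + 1) = (ZMod.val j + m) % (m + 1) := by
        by_contra hne'
        rcases Nat.lt_or_ge ((ZMod.val i + m) % (m + 1)) ((ZMod.val j + m) % (m + 1))
          with h | h
        · exact key _ _ h hb hij
        · exact key _ _ (by omega) ha hij.symm
      apply ZMod.val_injective
      have hvi : ZMod.val i ≤ m := Nat.lt_succ_iff.mp (ZMod.val_lt i)
      have hvj : ZMod.val j ≤ m := Nat.lt_succ_iff.mp (ZMod.val_lt j)
      rw [mod_helper _ _ hvi, mod_helper _ _ hvj] at hab
      by_cases hi0 : ZMod.val i = 0 <;> by_cases hj0 : ZMod.val j = 0 <;>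
        simp [hi0, hj0] at hab ⊢ <;> omega
    · -- adjacency
      intro i
      simp only
      have hv1 : ZMod.val (i + 1) = (ZMod.val i + 1) % (m + 1) := by
        rw [ZMod.val_add, ZMod.val_one'' (by omega)]
      have hb : (ZMod.val (i + 1) + m) % (m + 1)
          = ((ZMod.val i + m) % (m + 1) + 1) % (m + 1) := by
        rw [hv1, Nat.mod_add_mod, Nat.mod_add_mod]
        congr 1
        omega
      rw [hb]
      have ha : (ZMod.val i + m) % (m + 1) ≤ m :=
        Nat.lt_succ_iff.mp (Nat.mod_lt _ (by omega))
      rcases Nat.lt_or_ge ((ZMod.val i + m) % (m + 1)) m with h | h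
      · have hlt : (ZMod.val i + m) % (m + 1) + 1 < m + 1 := by omega
        rw [Nat.mod_eq_of_lt hlt]
        exact hWadj _ h
      · have hEq : (ZMod.val i + m) % (m + 1) = m := by omega
        rw [hEq, Nat.mod_self, hWm, hW0]
        exact huv
    · -- c 0 = u
      simp only [ZMod.val_zero, Nat.zero_add]
      have hlt : m < m + 1 := by omega
      rw [Nat.mod_eq_of_lt hlt]
      exact hWm
    · -- c 1 = v
      simp only
      rw [ZMod.val_one'' (by omega : m + 1 ≠ 1),
        show (1 + m) % (m + 1) = 0 by rw [Nat.add_comm]; exact Nat.mod_self (m + 1)]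
      exact hW0
  -- lower bound
  have hlb : ∀ L ∈ {L | IsCycleThroughEdge (KautzAdj d D) u v L}, m + 1 ≤ L := by
    intro L hL
    obtain ⟨hL0, c, hinj, hadj, h0, h1⟩ := hL
    have hw := cycle_walk' c hadj (L - 1) 1
    have hcast : (1 : ZMod L) + ((L - 1 : ℕ) : ZMod L) = 0 := by
      have hself : ((L : ℕ) : ZMod L) = 0 := ZMod.natCast_self L
      calc (1 : ZMod L) + ((L - 1 : ℕ) : ZMod L)
          = ((1 + (L - 1) : ℕ) : ZMod L) := by push_cast; ring
        _ = ((L : ℕ) : ZMod L) := by rw [show 1 + (L - 1) = L by omega]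
        _ = 0 := hself
    rw [hcast, h0, h1] at hw
    by_contra hlt
    push_neg at hlt
    exact hB (L - 1) (by omega) hw
  have hinf : sInf {L | IsCycleThroughEdge (KautzAdj d D) u v L} = m + 1 :=
    le_antisymm (Nat.sInf_le hmem) (le_csInf ⟨_, hmem⟩ hlb)
  show sInf {L | IsCycleThroughEdge (KautzAdj d D) u v L} = D + 2 - r
  rw [hinf]
  omega
/-- If `r` is the largest `t ∈ {0, …, D+1}` such that the
suffix of `v` of length `t` equals the prefix of `u` of length `t`, then the
shortest directed cycle through the edge `u → v` of `K(d, D)` has length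
exactly `D + 2 − r`. -/
theorem cycleLen_eq_of_overlap (d D : ℕ) (hd : 2 ≤ d) (hD : 1 ≤ D)
    (u v : KautzVertex d D) (huv : KautzAdj d D u v) (r : ℕ)
    (hr : Overlap d D u v r) (hmax : ∀ t, Overlap d D u v t → t ≤ r) :
    cycleLen (KautzAdj d D) u v = D + 2 - r := by
  exact cycleLen_eq_of_overlap' d D hd hD u v huv r hr hmax
end

section
/- Let d ≥ 2, D ≥ 1, and let (u → v) be a directed edge of the Kautz digraph K(d, D). Let r be the largest t ∈ {0, …, D+1} such that the suffix of v of length t equals the prefix of u of length t. Then the directed distance from v to u in K(d, D) is exactly D + 1 − r. -/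
lemma app_congr {n m : ℕ} (w : Fin n → Fin m) {i j : ℕ} (hi : i < n) (hj : j < n)
    (h : i = j) : w ⟨i, hi⟩ = w ⟨j, hj⟩ := by subst h; rfl

lemma walk_prefix {d D : ℕ} {m : ℕ} {x y : KautzVertex d D}
    (h : HasWalk (KautzAdj d D) m x y) :
    ∀ i : ℕ, (hm : m + i < D + 1) → y.1 ⟨i, by omega⟩ = x.1 ⟨m + i, hm⟩ := by
  induction m generalizing x with
  | zero =>
    intro i hm
    subst h
    exact app_congr _ _ _ (by omega)
  | succ n ih =>
    obtain ⟨w, hxw, hwy⟩ := h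
    intro i hm
    rw [ih hwy i (by omega)]
    have := hxw ⟨n + i, by omega⟩
    simp only [Fin.castSucc, Fin.succ, Fin.castAdd, Fin.castLE] at this
    exact this.trans (app_congr _ _ _ (by omega))

lemma shift_kautz {d D : ℕ} {s : ℕ → Fin (d+1)} {a m : ℕ}
    (hs : ∀ k, k + 1 < D + 1 + m → s k ≠ s (k+1)) (ha : a ≤ m) :
    IsKautzWord d (D+1) (fun i => s (a + i)) := by
  intro i h
  have := hs (a + i) (by omega)
  simpa [Nat.add_assoc] using this

lemma hasWalk_of_seq {d D : ℕ} (m : ℕ) (s : ℕ → Fin (d+1))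
    (hs : ∀ k, k + 1 < D + 1 + m → s k ≠ s (k+1))
    (x y : KautzVertex d D)
    (hx : ∀ i : Fin (D+1), x.1 i = s i)
    (hy : ∀ i : Fin (D+1), y.1 i = s (m + i)) :
    HasWalk (KautzAdj d D) m x y := by
  induction m generalizing s x with
  | zero =>
    apply Subtype.ext; funext i
    rw [hx, hy]
    exact congrArg s (by omega)
  | succ n ih =>
    refine ⟨⟨fun i => s (1 + i), shift_kautz hs (by omega)⟩, ?_, ?_⟩
    · intro i
      show s (1 + (i.castSucc : ℕ)) = x.1 i.succ
      rw [hx]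
      exact congrArg s (by simp [Nat.add_comm])
    · apply ih (fun k => s (1 + k))
      · intro k hk; have := hs (1+k) (by omega); simpa [Nat.add_assoc] using this
      · intro i; rfl
      · intro i; rw [hy]; exact congrArg s (by omega)

/-- If `r` is the largest `t ∈ {0, …, D+1}` such that the
suffix of `v` of length `t` equals the prefix of `u` of length `t`, then the
directed distance from `v` to `u` in `K(d, D)` is exactly `D + 1 − r`. -/
theorem dist_back_eq_of_overlap (d D : ℕ) (hd : 2 ≤ d) (hD : 1 ≤ D)
    (u v : KautzVertex d D) (huv : KautzAdj d D u v) (r : ℕ)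
    (hr : Overlap d D u v r) (hmax : ∀ t, Overlap d D u v t → t ≤ r) :
    ddist (KautzAdj d D) v u = D + 1 - r := by
  obtain ⟨hr1, hov⟩ := hr
  -- r ≤ D
  have hrD : r ≤ D := by
    by_contra h
    have hr' : r = D + 1 := by omega
    have h01 : u.1 ⟨0, by omega⟩ ≠ u.1 ⟨1, by omega⟩ := u.2 0 (by omega)
    have e0 : v.1 ⟨0, by omega⟩ = u.1 ⟨0, by omega⟩ := by
      have := hov 0 (by omega)
      exact (app_congr v.1 _ _ (by omega)).symm.trans this
    have e1 : v.1 ⟨0, by omega⟩ = u.1 ⟨1, by omega⟩ := huv ⟨0, by omega⟩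
    exact h01 (e0.symm.trans e1)
  set m := D + 1 - r with hm
  -- junction: v_D ≠ u_r
  have hne : v.1 ⟨D, by omega⟩ ≠ u.1 ⟨r, by omega⟩ := by
    rcases Nat.eq_zero_or_pos r with h0 | hpos
    · intro heq
      have hov1 : Overlap d D u v 1 := by
        refine ⟨by omega, fun i hi => ?_⟩
        have hi0 : i = 0 := by omega
        subst hi0
        subst h0
        exact (app_congr v.1 _ _ (by omega)).trans (heq.trans (app_congr u.1 _ _ rfl))
      have := hmax 1 hov1; omega
    · have h1 := hov (r-1) (by omega)
      have h2 : u.1 ⟨r-1, by omega⟩ ≠ u.1 ⟨r, by omega⟩ := by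
        have := u.2 (r-1) (by omega)
        exact fun he => this (he.trans (app_congr u.1 _ _ (by omega)).symm)
      intro heq
      apply h2
      exact h1.symm.trans ((app_congr v.1 _ _ (by omega)).trans heq)
  set s : ℕ → Fin (d+1) := fun k =>
    if h : k < D + 1 then v.1 ⟨k, h⟩ else u.1 ⟨min D (k - (D+1) + r), by omega⟩ with hs_def
  have hs : ∀ k, k + 1 < D + 1 + m → s k ≠ s (k+1) := by
    intro k hk
    rcases lt_trichotomy (k+1) (D+1) with h | h | h
    · simp only [hs_def, dif_pos (show k < D+1 by omega), dif_pos h]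
      exact v.2 k h
    · simp only [hs_def, dif_pos (show k < D+1 by omega), dif_neg (show ¬ k+1 < D+1 by omega)]
      intro he
      exact hne (((app_congr v.1 _ _ (show D = k by omega)).trans he).trans
        (app_congr u.1 _ _ (by omega)))
    · simp only [hs_def, dif_neg (show ¬ k < D+1 by omega), dif_neg (show ¬ k+1 < D+1 by omega)]
      have hb : k - (D+1) + r + 1 < D + 1 := by omega
      have hu := u.2 (k - (D+1) + r) hb
      intro he
      exact hu ((app_congr u.1 _ _ (by omega)).symm.trans
        (he.trans (app_congr u.1 _ _ (by omega))))
  have hwalk : HasWalk (KautzAdj d D) m v u := by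
    refine hasWalk_of_seq (D := D) m s hs v u ?_ ?_
    · intro i
      simp only [hs_def, dif_pos i.isLt]
    · intro i
      have hiD : (i : ℕ) < D + 1 := i.isLt
      by_cases h : m + (i : ℕ) < D + 1
      · simp only [hs_def, dif_pos h]
        have hov_i := hov i (by omega)
        exact hov_i.symm.trans (app_congr v.1 _ _ (by omega))
      · simp only [hs_def, dif_neg h]
        exact app_congr u.1 i.isLt _ (by omega)
  show sInf {n | HasWalk (KautzAdj d D) n v u} = m
  apply le_antisymm
  · exact Nat.sInf_le hwalk
  · refine le_csInf ⟨m, hwalk⟩ ?_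
    intro k hk
    by_contra hlt
    push_neg at hlt
    have hov' : Overlap d D u v (D + 1 - k) := by
      refine ⟨by omega, fun i hi => ?_⟩
      have hpw := walk_prefix hk i (by omega)
      exact (app_congr v.1 _ _ (by omega)).trans hpw.symm
    have := hmax _ hov'
    omega
end

section
/- Let d ≥ 2 and D ≥ 1. For every directed edge uv of the Kautz digraph K(d, D), there is a unique shortest directed cycle of K(d, D) containing the edge uv: any two directed cycles through uv of minimal length coincide. -/
namespace KautzAux

/-- Forward shift along a walk: letter `i` of vertex `a + m` is letter `i + m` of vertex `a`. -/
lemma walk_shift {d D L : ℕ} (c : ZMod L → KautzVertex d D)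
    (hadj : ∀ i, KautzAdj d D (c i) (c (i + 1))) (a : ZMod L) :
    ∀ (m i : ℕ) (h : i + m ≤ D),
      (c (a + (m : ℕ))).1 ⟨i, by omega⟩ = (c a).1 ⟨i + m, by omega⟩ := by
  intro m
  induction m with
  | zero => intro i h; simp
  | succ m ih =>
    intro i h
    have h1 : (a + ((m + 1 : ℕ) : ZMod L)) = (a + (m : ℕ)) + 1 := by push_cast; ring
    rw [h1]
    have h2 := hadj (a + (m : ℕ)) ⟨i, by omega⟩
    have h3 : (c ((a + (m : ℕ)) + 1)).1 ⟨i, by omega⟩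
        = (c (a + (m : ℕ))).1 ⟨i + 1, by omega⟩ := h2
    rw [h3, ih (i + 1) (by omega)]
    exact congrArg (c a).1 (by simp only [Fin.mk.injEq]; omega)

/-- Values of a periodic function are determined mod the period. -/
lemma periodic_mod {α : Type*} (s : ℕ → α) (p : ℕ) (hp : 0 < p)
    (hs : ∀ n, s (n + p) = s n) : ∀ n, s n = s (n % p) := by
  intro n
  induction n using Nat.strong_induction_on with
  | _ n ih =>
    rcases lt_or_ge n p with h | h
    · rw [Nat.mod_eq_of_lt h]
    · have e1 : n % p = (n - p) % p := Nat.mod_eq_sub_mod h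
      have e2 : n - p + p = n := by omega
      rw [e1, ← ih (n - p) (by omega), ← hs (n - p), e2]


/-- If a `p`-periodic sequence agrees with its `δ`-shift on `Dp+1` consecutive
positions and `p ≤ Dp + 2`, then it agrees with its `δ`-shift everywhere. -/
lemma period_of_window_eq {d p : ℕ} (hp2 : 2 ≤ p) (s : ℕ → Fin (d + 1))
    (hper : ∀ n, s (n + p) = s n) (Dp : ℕ) (hcov : p ≤ Dp + 2)
    (A δ : ℕ) (hδp : δ < p)
    (hwin : ∀ i ≤ Dp, s (A + i + δ) = s (A + i)) :
    ∀ n, s (n + δ) = s n := by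
  haveI : NeZero p := ⟨by omega⟩
  have smod := periodic_mod s p (by omega) hper
  set F : ZMod p → ZMod (d + 1) := fun x => ((s x.val).val : ZMod (d + 1)) with hF
  have hFn : ∀ n : ℕ, F (n : ZMod p) = ((s n).val : ZMod (d + 1)) := by
    intro n
    simp only [hF, ZMod.val_natCast]
    rw [← smod n]
  set δ' : ZMod p := ((δ : ℕ) : ZMod p) with hδ'
  -- main pointwise claim for covered indices
  have hC1 : ∀ x : ZMod p, (x - (A : ZMod p)).val ≤ Dp → F (x + δ') = F x := by
    intro x hi
    set i : ℕ := (x - (A : ZMod p)).val with hidef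
    have hx : ((A + i : ℕ) : ZMod p) = x := by
      push_cast
      rw [hidef, ZMod.natCast_rightInverse (x - (A : ZMod p))]
      ring
    have h1 : x + δ' = ((A + i + δ : ℕ) : ZMod p) := by
      rw [hδ', ← hx]
      push_cast
      ring
    rw [h1, ← hx, hFn, hFn, hwin i hi]
  have hCall : ∀ x : ZMod p, F (x + δ') = F x := by
    by_cases hp : p = Dp + 2
    · -- possibly one uncovered residue; use the vanishing-sum argument
      set x₀ : ZMod p := ((A + (Dp + 1) : ℕ) : ZMod p) with hx₀
      have hne : ∀ x : ZMod p, x ≠ x₀ → (x - (A : ZMod p)).val ≤ Dp := by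
        intro x hxne
        by_contra hgt
        have hlt : (x - (A : ZMod p)).val < p := ZMod.val_lt _
        have : (x - (A : ZMod p)).val = Dp + 1 := by omega
        apply hxne
        have hx : ((A + (x - (A : ZMod p)).val : ℕ) : ZMod p) = x := by
          push_cast
          rw [ZMod.natCast_rightInverse (x - (A : ZMod p))]
          ring
        rw [← hx, this]
      have hsum : ∑ x : ZMod p, F (x + δ') = ∑ x : ZMod p, F x :=
        Fintype.sum_equiv (Equiv.addRight δ') _ _ (fun x => rfl)
      have hzero : ∑ x : ZMod p, (F (x + δ') - F x) = 0 := by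
        rw [Finset.sum_sub_distrib, hsum, sub_self]
      have hsingle : ∑ x : ZMod p, (F (x + δ') - F x) = F (x₀ + δ') - F x₀ :=
        Fintype.sum_eq_single x₀ (fun x hx => by rw [hC1 x (hne x hx), sub_self])
      have hx₀eq : F (x₀ + δ') = F x₀ := by
        have := hsingle.symm.trans hzero
        linear_combination this
      intro x
      by_cases hxx : x = x₀
      · rw [hxx]; exact hx₀eq
      · exact hC1 x (hne x hxx)
    · intro x
      have hlt : (x - (A : ZMod p)).val < p := ZMod.val_lt _
      exact hC1 x (by omega)
  intro n
  have key := hCall ((n : ℕ) : ZMod p)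
  have h1 : ((n : ℕ) : ZMod p) + δ' = ((n + δ : ℕ) : ZMod p) := by push_cast; ring
  rw [h1, hFn, hFn] at key
  have key2 := congrArg ZMod.val key
  rw [ZMod.val_natCast, ZMod.val_natCast, Nat.mod_eq_of_lt (s _).isLt,
    Nat.mod_eq_of_lt (s _).isLt] at key2
  exact Fin.ext key2


end KautzAux

namespace KautzAux
/-- From a periodic Kautz sequence whose windows at 0 and 1 are `u` and `v`,
build a directed cycle through the arc `u → v` of length at most `D + 2`. -/
lemma cycle_of_periodic_s7 (d D : ℕ) (u v : KautzVertex d D)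
    (s : ℕ → Fin (d + 1)) (P : ℕ) (hP1 : 1 ≤ P) (hP2 : P ≤ D + 2)
    (hper : ∀ n, s (n + P) = s n)
    (hkz : ∀ n, s n ≠ s (n + 1))
    (hu : ∀ i : Fin (D + 1), s i.val = u.1 i)
    (hv : ∀ i : Fin (D + 1), s (1 + i.val) = v.1 i) :
    ∃ p, p ≤ D + 2 ∧ IsCycleThroughEdge (KautzAdj d D) u v p := by
  classical
  have hex : ∃ q, 0 < q ∧ ∀ n, s (n + q) = s n := ⟨P, by omega, hper⟩
  set p := Nat.find hex with hpdef
  obtain ⟨hp0, hp⟩ := Nat.find_spec hex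
  have hpP : p ≤ P := Nat.find_le ⟨by omega, hper⟩
  have hp2 : 2 ≤ p := by
    by_contra h
    have hp1 : p = 1 := by omega
    have h0 := hp 0
    rw [← hpdef, hp1] at h0
    exact hkz 0 h0.symm
  haveI : NeZero p := ⟨by omega⟩
  have smod := KautzAux.periodic_mod s p (by omega) hp
  set c : ZMod p → KautzVertex d D := fun t =>
    ⟨fun i => s (t.val + i.val), by
      intro i h
      simp only
      have : t.val + (i + 1) = (t.val + i) + 1 := by omega
      rw [this]
      exact hkz (t.val + i)⟩ with hc
  have hcletter : ∀ (t : ZMod p) (i : Fin (D + 1)), (c t).1 i = s (t.val + i.val) :=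
    fun t i => rfl
  -- adjacency
  have hadj : ∀ t, KautzAdj d D (c t) (c (t + 1)) := by
    intro t i
    rw [hcletter, hcletter]
    have hv1 : (1 : ZMod p).val = 1 := by
      rw [ZMod.val_one_eq_one_mod, Nat.mod_eq_of_lt (by omega)]
    have hval : (t + 1).val = (t.val + 1) % p := by rw [ZMod.val_add, hv1]
    have e1 : i.castSucc.val = i.val := rfl
    have e2 : i.succ.val = i.val + 1 := rfl
    rw [e1, e2, hval]
    rw [smod ((t.val + 1) % p + i.val), Nat.mod_add_mod, ← smod (t.val + 1 + i.val)]
    congr 1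
    omega
  -- endpoints
  have hc0 : c 0 = u := by
    apply Subtype.ext; funext i
    rw [hcletter, ZMod.val_zero, Nat.zero_add]
    exact hu i
  have hc1 : c 1 = v := by
    apply Subtype.ext; funext i
    rw [hcletter]
    have hv1 : (1 : ZMod p).val = 1 := by
      rw [ZMod.val_one_eq_one_mod, Nat.mod_eq_of_lt (by omega)]
    rw [hv1]
    exact hv i
  -- injectivity
  have key : ∀ t t' : ZMod p, c t = c t' → t.val < t'.val → False := by
    intro t t' h hlt
    set A := t.val with hA
    set B := t'.val with hB
    set δ := B - A with hδ
    have hδ0 : 0 < δ := by omega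
    have hδp : δ < p := by have := ZMod.val_lt t'; omega
    have hwin : ∀ i ≤ D, s (A + i + δ) = s (A + i) := by
      intro i hi
      have := congrFun (congrArg Subtype.val h) ⟨i, by omega⟩
      simp only [hc] at this
      have e : A + i + δ = B + i := by omega
      rw [e]
      exact this.symm
    have hall := KautzAux.period_of_window_eq hp2 s hp D (by omega) A δ hδp hwin
    exact Nat.find_min hex (show δ < p from hδp) ⟨hδ0, hall⟩
  have hinj : Function.Injective c := by
    intro t t' h
    rcases lt_trichotomy t.val t'.val with hlt | heq | hgt
    · exact absurd (key t t' h hlt) (fun f => f.elim)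
    · exact ZMod.val_injective p heq
    · exact absurd (key t' t h.symm hgt) (fun f => f.elim)
  exact ⟨p, by omega, by omega, c, hinj, hadj, hc0, hc1⟩

lemma exists_short_cycle (d D : ℕ) (hD : 1 ≤ D) (u v : KautzVertex d D)
    (huv : KautzAdj d D u v) :
    ∃ p, p ≤ D + 2 ∧ IsCycleThroughEdge (KautzAdj d D) u v p := by
  classical
  set a : Fin (d + 1) := v.1 ⟨D, by omega⟩ with ha
  have hshift : ∀ i : ℕ, (h : i < D) → v.1 ⟨i, by omega⟩ = u.1 ⟨i + 1, by omega⟩ := by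
    intro i h
    have := huv ⟨i, h⟩
    convert this using 2 <;> rfl
  have hua : u.1 ⟨D, by omega⟩ ≠ a := by
    have h1 : v.1 ⟨D - 1, by omega⟩ = u.1 ⟨D, by omega⟩ := by
      have := hshift (D - 1) (by omega)
      convert this using 3 <;> omega
    have h2 := v.2 (D - 1) (by omega)
    rw [ha, ← h1]
    have e : D - 1 + 1 = D := by omega
    intro hcon
    apply h2
    convert hcon using 3 <;> omega
  by_cases hcase : a = u.1 ⟨0, by omega⟩
  · -- period D+1 : the letters of u
    set s : ℕ → Fin (d + 1) := fun n => u.1 ⟨n % (D + 1), Nat.mod_lt n (by omega)⟩ with hs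
    have su : ∀ n m : ℕ, (hm : m < D + 1) → n % (D + 1) = m → s n = u.1 ⟨m, hm⟩ := by
      intro n m hm h
      simp only [hs]
      exact congrArg u.1 (Fin.ext h)
    apply cycle_of_periodic_s7 d D u v s (D + 1) (by omega) (by omega)
    · intro n
      rw [su (n + (D + 1)) (n % (D + 1)) (Nat.mod_lt n (by omega)) (Nat.add_mod_right n _),
        su n (n % (D + 1)) (Nat.mod_lt n (by omega)) rfl]
    · intro n
      have hrlt : n % (D + 1) < D + 1 := Nat.mod_lt n (by omega)
      rcases Nat.lt_or_ge (n % (D + 1)) D with h | h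
      · rw [su n (n % (D + 1)) (by omega) rfl,
          su (n + 1) (n % (D + 1) + 1) (by omega)
            (by rw [Nat.add_mod, Nat.mod_eq_of_lt (show 1 < D + 1 by omega),
                Nat.mod_eq_of_lt (by omega)])]
        exact u.2 (n % (D + 1)) (by omega)
      · have hrD : n % (D + 1) = D := by omega
        rw [su n D (by omega) hrD,
          su (n + 1) 0 (by omega)
            (by rw [Nat.add_mod, Nat.mod_eq_of_lt (show 1 < D + 1 by omega), hrD,
                Nat.mod_self])]
        intro hcon
        exact hua (by rw [hcon, ← hcase])
    · intro i
      rw [su i.val i.val i.isLt (Nat.mod_eq_of_lt i.isLt)]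
    · intro i
      rcases Nat.lt_or_ge i.val D with h | h
      · rw [su (1 + i.val) (i.val + 1) (by omega)
            (by rw [Nat.mod_eq_of_lt (by omega)]; omega)]
        exact (hshift i.val h).symm
      · have hiD : i.val = D := by have := i.isLt; omega
        rw [su (1 + i.val) 0 (by omega)
            (by rw [show 1 + i.val = D + 1 by omega, Nat.mod_self])]
        rw [← hcase, ha]
        exact congrArg v.1 (Fin.ext hiD.symm)
  · -- period D+2 : the letters of u followed by a
    set s : ℕ → Fin (d + 1) := fun n =>
      if h : n % (D + 2) ≤ D then u.1 ⟨n % (D + 2), by omega⟩ else a with hs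
    have su : ∀ n m : ℕ, (hm : m < D + 1) → n % (D + 2) = m → s n = u.1 ⟨m, hm⟩ := by
      intro n m hm h
      simp only [hs]
      rw [dif_pos (by omega : n % (D + 2) ≤ D)]
      exact congrArg u.1 (Fin.ext h)
    have sa : ∀ n : ℕ, n % (D + 2) = D + 1 → s n = a := by
      intro n h
      simp only [hs]
      rw [dif_neg (by omega)]
    have h1mod : 1 % (D + 2) = 1 := Nat.mod_eq_of_lt (by omega)
    apply cycle_of_periodic_s7 d D u v s (D + 2) (by omega) (by omega)
    · intro n
      simp only [hs, Nat.add_mod_right]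
    · intro n
      have hrlt : n % (D + 2) < D + 2 := Nat.mod_lt n (by omega)
      rcases Nat.lt_or_ge (n % (D + 2)) D with h | h
      · rw [su n (n % (D + 2)) (by omega) rfl,
          su (n + 1) (n % (D + 2) + 1) (by omega)
            (by rw [Nat.add_mod, h1mod, Nat.mod_eq_of_lt (by omega)])]
        exact u.2 (n % (D + 2)) (by omega)
      · rcases Nat.lt_or_ge (n % (D + 2)) (D + 1) with h1 | h1
        · have hrD : n % (D + 2) = D := by omega
          rw [su n D (by omega) hrD,
            sa (n + 1) (by rw [Nat.add_mod, h1mod, hrD, Nat.mod_eq_of_lt (by omega)])]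
          exact hua
        · have hrD : n % (D + 2) = D + 1 := by omega
          rw [sa n hrD,
            su (n + 1) 0 (by omega)
              (by rw [Nat.add_mod, h1mod, hrD, Nat.mod_self])]
          exact hcase
    · intro i
      rw [su i.val i.val i.isLt (Nat.mod_eq_of_lt (by have := i.isLt; omega))]
    · intro i
      rcases Nat.lt_or_ge i.val D with h | h
      · rw [su (1 + i.val) (i.val + 1) (by omega)
            (by rw [Nat.mod_eq_of_lt (by omega)]; omega)]
        exact (hshift i.val h).symm
      · have hiD : i.val = D := by have := i.isLt; omega
        rw [sa (1 + i.val)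
            (by rw [show 1 + i.val = D + 1 by omega, Nat.mod_eq_of_lt (by omega)]), ha]
        exact congrArg v.1 (Fin.ext hiD.symm)

/-- In a short cycle (length ≤ D+2), every letter of every vertex is determined
by `u`, `v` and the position. -/
lemma cycle_vertex_eq {d D L : ℕ} [NeZero L] (u v : KautzVertex d D)
    (hLD : L ≤ D + 2)
    (c : ZMod L → KautzVertex d D)
    (hadj : ∀ i, KautzAdj d D (c i) (c (i + 1)))
    (hc0 : c 0 = u) (hc1 : c 1 = v)
    (t : ℕ) (ht : t + 1 ≤ L) (i : Fin (D + 1)) :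
    (c (1 + (t : ℕ))).1 i =
      if h : i.val + t ≤ D then v.1 ⟨i.val + t, by omega⟩
      else u.1 ⟨i.val + t + 1 - L, by have := i.isLt; omega⟩ := by
  split_ifs with h
  · have key := KautzAux.walk_shift c hadj 1 t i.val (by omega)
    rw [show ((1 : ZMod L) + (t : ℕ)) = (1 + (t : ℕ)) from rfl] at key
    rw [show ((⟨i.val, by omega⟩ : Fin (D + 1))) = i from Fin.ext rfl] at key
    rw [key, hc1]
  · have hiL : i.val + t + 1 ≥ L := by have := i.isLt; omega
    set m : ℕ := L - 1 - t with hm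
    set j : ℕ := i.val + t + 1 - L with hj
    have hjm : j + m = i.val := by omega
    have key := KautzAux.walk_shift c hadj (1 + (t : ℕ)) m j (by omega)
    have e0 : (1 + (t : ℕ) + (m : ℕ) : ZMod L) = 0 := by
      have : ((1 + t + m : ℕ) : ZMod L) = ((L : ℕ) : ZMod L) := by
        congr 1
        omega
      rw [ZMod.natCast_self] at this
      push_cast at this
      rw [← this]
    rw [e0, hc0] at key
    have e1 : ((⟨j + m, by omega⟩ : Fin (D + 1))) = i := Fin.ext (by simp [hjm])
    rw [e1] at key
    rw [← key]

theorem shortest_cycle_unique' (d D : ℕ) (hD : 1 ≤ D)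
    (u v : KautzVertex d D) (huv : KautzAdj d D u v) (L : ℕ) (hL : 0 < L)
    (hmin : ∀ L', IsCycleThroughEdge (KautzAdj d D) u v L' → L ≤ L')
    (c₁ c₂ : ZMod L → KautzVertex d D)
    (hc₁adj : ∀ i, KautzAdj d D (c₁ i) (c₁ (i + 1)))
    (hc₁u : c₁ 0 = u) (hc₁v : c₁ 1 = v)
    (hc₂adj : ∀ i, KautzAdj d D (c₂ i) (c₂ (i + 1)))
    (hc₂u : c₂ 0 = u) (hc₂v : c₂ 1 = v) :
    c₁ = c₂ := by
  obtain ⟨p, hpD, hpcyc⟩ := exists_short_cycle d D hD u v huv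
  have hLD : L ≤ D + 2 := le_trans (hmin p hpcyc) hpD
  haveI : NeZero L := ⟨by omega⟩
  funext z
  have hz : z = 1 + (((z - 1).val : ℕ) : ZMod L) := by
    rw [ZMod.natCast_rightInverse (z - 1)]
    ring
  have ht : (z - 1).val + 1 ≤ L := ZMod.val_lt (z - 1)
  apply Subtype.ext
  funext i
  rw [hz, cycle_vertex_eq u v hLD c₁ hc₁adj hc₁u hc₁v ((z - 1).val) ht i,
    cycle_vertex_eq u v hLD c₂ hc₂adj hc₂u hc₂v ((z - 1).val) ht i]


end KautzAux

/-- For every directed edge `u → v` of `K(d, D)` (with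
`d ≥ 2`, `D ≥ 1`), the shortest directed cycle through `u → v` is unique:
any two directed cycles through `u → v` of minimal length coincide. -/
theorem shortest_cycle_unique (d D : ℕ) (hd : 2 ≤ d) (hD : 1 ≤ D)
    (u v : KautzVertex d D) (huv : KautzAdj d D u v) (L : ℕ) (hL : 0 < L)
    (hmin : ∀ L', IsCycleThroughEdge (KautzAdj d D) u v L' → L ≤ L')
    (c₁ c₂ : ZMod L → KautzVertex d D)
    (hc₁inj : Function.Injective c₁)
    (hc₁adj : ∀ i, KautzAdj d D (c₁ i) (c₁ (i + 1)))
    (hc₁u : c₁ 0 = u) (hc₁v : c₁ 1 = v)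
    (hc₂inj : Function.Injective c₂)
    (hc₂adj : ∀ i, KautzAdj d D (c₂ i) (c₂ (i + 1)))
    (hc₂u : c₂ 0 = u) (hc₂v : c₂ 1 = v) :
    c₁ = c₂ :=
  KautzAux.shortest_cycle_unique' d D hD u v huv L hL hmin c₁ c₂
    hc₁adj hc₁u hc₁v hc₂adj hc₂u hc₂v
end

section
/- Let q ≥ 2 and n ≥ 3. The number of functions f : ZMod n → Fin q satisfying f(i) ≠ f(i+1) for all i ∈ ZMod n (proper q-colorings of the cycle C_n) that are aperiodic — i.e., f(· + s) = f only for s = 0 in ZMod n — equals ∑_{j | n} μ(j) · (q−1)^{n/j}, where μ is the Möbius function and the sum is over positive divisors j of n. Equivalently, the number of rotation classes of such aperiodic proper colorings is (1/n) ∑_{j | n} μ(j) (q−1)^{n/j}. -/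
/-- A proper `q`-coloring of the directed cycle `C_n`. -/
def IsProperColoring (n q : ℕ) (f : ZMod n → Fin q) : Prop :=
  ∀ i, f i ≠ f (i + 1)

/-- A coloring of `C_n` is aperiodic (primitive) if its only rotational
symmetry is the trivial one. -/
def IsAperiodic (n q : ℕ) (f : ZMod n → Fin q) : Prop :=
  ∀ s : ZMod n, (∀ i, f (i + s) = f i) → s = 0

/-- Rotation equivalence of colorings of `C_n`. -/
def RotEquiv (n q : ℕ) (f g : ZMod n → Fin q) : Prop :=
  ∃ s : ZMod n, ∀ i, f (i + s) = g i

set_option linter.unusedSectionVars false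

namespace AperiodicAux
variable {q : ℕ}

def Per (m : ℕ) (f : ZMod m → Fin q) (k : ℕ) : Prop := ∀ i, f (i + (k : ZMod m)) = f i

def perGroup (m : ℕ) (f : ZMod m → Fin q) : AddSubgroup (ZMod m) where
  carrier := {s | ∀ i, f (i + s) = f i}
  zero_mem' := fun i => by rw [add_zero]
  add_mem' := fun {a b} ha hb i => by rw [← add_assoc, hb, ha]
  neg_mem' := fun {s} hs i => by
    have h := hs (i + -s); rw [add_assoc, neg_add_cancel, add_zero] at h; exact h.symm

lemma per_iff_mem {m : ℕ} {f : ZMod m → Fin q} {k : ℕ} :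
    Per m f k ↔ (k : ZMod m) ∈ perGroup m f := Iff.rfl

lemma per_mul {m : ℕ} {f : ZMod m → Fin q} {k : ℕ} (h : Per m f k) (c : ℕ) :
    Per m f (k * c) := by
  rw [per_iff_mem] at h ⊢
  have : ((k * c : ℕ) : ZMod m) = c • ((k : ZMod m)) := by push_cast; rw [nsmul_eq_mul]; ring
  rw [this]
  exact AddSubgroup.nsmul_mem _ h c

lemma per_gcd {m : ℕ} {f : ZMod m → Fin q} {a b : ℕ} (ha : Per m f a) (hb : Per m f b) :
    Per m f (Nat.gcd a b) := by
  rw [per_iff_mem] at ha hb ⊢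
  have key : ((Nat.gcd a b : ℕ) : ZMod m)
      = (Nat.gcdA a b) • ((a : ZMod m)) + (Nat.gcdB a b) • ((b : ZMod m)) := by
    have h := Nat.gcd_eq_gcd_ab a b
    have : (((Nat.gcd a b : ℤ)) : ZMod m) = (((a : ℤ) * Nat.gcdA a b + (b : ℤ) * Nat.gcdB a b : ℤ) : ZMod m) := by
      rw [← h]
    push_cast at this ⊢
    rw [zsmul_eq_mul, zsmul_eq_mul]
    rw [this]; ring
  rw [key]
  exact add_mem (AddSubgroup.zsmul_mem _ ha _) (AddSubgroup.zsmul_mem _ hb _)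

noncomputable def minPer (m : ℕ) (f : ZMod m → Fin q) : ℕ := sInf {k | 0 < k ∧ Per m f k}

lemma per_self (m : ℕ) (f : ZMod m → Fin q) : Per m f m := fun i => by
  rw [ZMod.natCast_self, add_zero]

section
variable {m : ℕ} [NeZero m] {f : ZMod m → Fin q}

lemma minPer_mem : 0 < minPer m f ∧ Per m f (minPer m f) :=
  Nat.sInf_mem (⟨m, Nat.pos_of_ne_zero (NeZero.ne m), per_self m f⟩ :
    Set.Nonempty {k | 0 < k ∧ Per m f k})

lemma minPer_pos : 0 < minPer m f := minPer_mem.1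
lemma minPer_per : Per m f (minPer m f) := minPer_mem.2

lemma minPer_dvd {k : ℕ} (h : Per m f k) : minPer m f ∣ k := by
  rcases Nat.eq_zero_or_pos k with rfl | hk
  · simp
  have hg : Per m f (Nat.gcd (minPer m f) k) := per_gcd minPer_per h
  have h1 : minPer m f ≤ Nat.gcd (minPer m f) k :=
    Nat.sInf_le ⟨Nat.gcd_pos_of_pos_right _ hk, hg⟩
  have h2 : Nat.gcd (minPer m f) k ∣ minPer m f := Nat.gcd_dvd_left _ _
  have heq : Nat.gcd (minPer m f) k = minPer m f :=
    le_antisymm (Nat.le_of_dvd minPer_pos h2) h1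
  rw [← heq]
  exact Nat.gcd_dvd_right _ _

lemma per_of_dvd {k : ℕ} (h : minPer m f ∣ k) : Per m f k := by
  obtain ⟨c, rfl⟩ := h
  exact per_mul minPer_per c

lemma minPer_dvd_self : minPer m f ∣ m := minPer_dvd (per_self m f)

lemma minPer_eq_of_iff {e : ℕ} (hiff : ∀ k, Per m f k ↔ e ∣ k) : minPer m f = e :=
  Nat.dvd_antisymm (minPer_dvd ((hiff e).2 dvd_rfl)) ((hiff _).1 minPer_per)

lemma aperiodic_iff : IsAperiodic m q f ↔ minPer m f = m := by
  constructor
  · intro h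
    refine Nat.dvd_antisymm minPer_dvd_self ?_
    have hp : ∀ i, f (i + ((minPer m f : ℕ) : ZMod m)) = f i := minPer_per
    have h0 := h ((minPer m f : ℕ) : ZMod m) hp
    exact (ZMod.natCast_eq_zero_iff _ _).1 h0
  · intro h s hs
    have hper : Per m f s.val := fun i => by rw [ZMod.natCast_zmod_val]; exact hs i
    have hd : m ∣ s.val := by have := minPer_dvd hper; rwa [h] at this
    have hv : s.val = 0 := Nat.eq_zero_of_dvd_of_lt hd (ZMod.val_lt s)
    calc s = ((s.val : ℕ) : ZMod m) := (ZMod.natCast_zmod_val s).symm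
    _ = 0 := by rw [hv]; simp

end
end AperiodicAux

namespace AperiodicAux
variable {q : ℕ}

section Transfer
variable {m e : ℕ} [NeZero m] [NeZero e] (h : e ∣ m)

noncomputable def toLower (f : ZMod m → Fin q) : ZMod e → Fin q :=
  fun j => f ((j.val : ℕ) : ZMod m)

noncomputable def toUpper (g : ZMod e → Fin q) : ZMod m → Fin q :=
  fun i => g (ZMod.castHom h (ZMod e) i)

lemma castHom_surj : Function.Surjective (ZMod.castHom h (ZMod e)) := fun j =>
  ⟨((j.val : ℕ) : ZMod m), by rw [map_natCast, ZMod.natCast_zmod_val]⟩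

lemma per_toUpper {g : ZMod e → Fin q} {k : ℕ} :
    Per m (toUpper h g) k ↔ Per e g k := by
  constructor
  · intro H j
    obtain ⟨i, rfl⟩ := castHom_surj h j
    have := H i
    simpa [toUpper, map_add, map_natCast] using this
  · intro H i
    show g (ZMod.castHom h (ZMod e) (i + _)) = _
    rw [map_add, map_natCast]
    exact H _

lemma proper_toUpper {g : ZMod e → Fin q} :
    IsProperColoring m q (toUpper h g) ↔ IsProperColoring e q g := by
  constructor
  · intro H j
    obtain ⟨i, rfl⟩ := castHom_surj h j
    have := H i
    simpa [toUpper, map_add, map_one] using this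
  · intro H i
    show g (ZMod.castHom h (ZMod e) i) ≠ g (ZMod.castHom h (ZMod e) (i + 1))
    rw [map_add, map_one]
    exact H _

lemma castHom_eq_val (x : ZMod m) :
    ZMod.castHom h (ZMod e) x = ((x.val : ℕ) : ZMod e) := by
  conv_lhs => rw [← ZMod.natCast_zmod_val x]
  rw [map_natCast]

lemma factor {f : ZMod m → Fin q} (hf : Per m f e) {a b : ZMod m}
    (hab : ZMod.castHom h (ZMod e) a = ZMod.castHom h (ZMod e) b) : f a = f b := by
  have h0 : ZMod.castHom h (ZMod e) (a - b) = 0 := by rw [map_sub, hab, sub_self]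
  rw [castHom_eq_val] at h0
  have hdvd : e ∣ (a - b).val := (ZMod.natCast_eq_zero_iff _ _).1 h0
  obtain ⟨t, ht⟩ := hdvd
  have hper : Per m f ((a - b).val) := by rw [ht]; exact per_mul hf t
  have := hper b
  rw [ZMod.natCast_zmod_val] at this
  rw [add_sub_cancel] at this
  exact this

lemma toLower_toUpper (g : ZMod e → Fin q) : toLower (toUpper h g) = g := by
  funext j
  show g (ZMod.castHom h (ZMod e) ((j.val : ℕ) : ZMod m)) = g j
  rw [map_natCast, ZMod.natCast_zmod_val]

lemma toUpper_toLower {f : ZMod m → Fin q} (hf : Per m f e) :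
    toUpper h (toLower f) = f := by
  funext i
  show f ((((ZMod.castHom h (ZMod e) i).val : ℕ) : ZMod m)) = f i
  refine factor h hf ?_
  rw [map_natCast, ZMod.natCast_zmod_val]

include h in
lemma per_toLower {f : ZMod m → Fin q} (hf : Per m f e) (k : ℕ) :
    Per e (toLower f) k ↔ Per m f k := by
  rw [← per_toUpper h, toUpper_toLower h hf]

include h in
lemma proper_toLower {f : ZMod m → Fin q} (hf : Per m f e) :
    IsProperColoring e q (toLower f) ↔ IsProperColoring m q f := by
  rw [← proper_toUpper h, toUpper_toLower h hf]

lemma per_iff_dvd_of_aperiodic {g : ZMod e → Fin q} (hg : IsAperiodic e q g) (k : ℕ) :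
    Per e g k ↔ e ∣ k := by
  have he : minPer e g = e := aperiodic_iff.1 hg
  constructor
  · intro hk; have := minPer_dvd hk; rwa [he] at this
  · intro hk; exact per_of_dvd (by rwa [he])

noncomputable def eqvMinPer :
    {f : ZMod m → Fin q // IsProperColoring m q f ∧ minPer m f = e} ≃
    {g : ZMod e → Fin q // IsProperColoring e q g ∧ IsAperiodic e q g} where
  toFun f := ⟨toLower f.1, by
    have hper : Per m f.1 e := by
      have := minPer_per (m := m) (f := f.1); rwa [f.2.2] at this
    refine ⟨(proper_toLower h hper).2 f.2.1, ?_⟩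
    rw [aperiodic_iff]
    refine minPer_eq_of_iff fun k => ?_
    rw [per_toLower h hper]
    constructor
    · intro hk; have := minPer_dvd hk; rwa [f.2.2] at this
    · intro hk; exact per_of_dvd (by rwa [f.2.2])⟩
  invFun g := ⟨toUpper h g.1, (proper_toUpper h).2 g.2.1,
    minPer_eq_of_iff fun k => (per_toUpper h).trans (per_iff_dvd_of_aperiodic g.2.2 k)⟩
  left_inv f := Subtype.ext (toUpper_toLower h (by
    have := minPer_per (m := m) (f := f.1); rwa [f.2.2] at this))
  right_inv g := Subtype.ext (toLower_toUpper h g.1)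

end Transfer

noncomputable def eqvSigma (m : ℕ) [NeZero m] :
    {f : ZMod m → Fin q // IsProperColoring m q f} ≃
    Σ e : m.divisors, {f : ZMod m → Fin q // IsProperColoring m q f ∧ minPer m f = e.1} := by
  refine (Equiv.ofBijective
    (fun p : (Σ e : m.divisors,
        {f : ZMod m → Fin q // IsProperColoring m q f ∧ minPer m f = e.1}) =>
      (⟨p.2.1, p.2.2.1⟩ : {f : ZMod m → Fin q // IsProperColoring m q f}))
    ⟨?_, ?_⟩).symm
  · rintro ⟨⟨e, he⟩, f, hpf, he2⟩ ⟨⟨e', he'⟩, f', hpf', he2'⟩ hyp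
    simp only [Subtype.mk.injEq] at hyp
    subst hyp
    have : e = e' := he2.symm.trans he2'
    subst this
    rfl
  · intro f
    exact ⟨⟨⟨minPer m f.1, Nat.mem_divisors.2 ⟨minPer_dvd_self, NeZero.ne m⟩⟩,
      ⟨f.1, f.2, rfl⟩⟩, rfl⟩

lemma nat_card_sigma {ι : Type*} [Fintype ι] (β : ι → Type*) [∀ i, Finite (β i)] :
    Nat.card (Σ i, β i) = ∑ i, Nat.card (β i) := by
  letI := fun i => Fintype.ofFinite (β i)
  simp only [Nat.card_eq_fintype_card, Fintype.card_sigma]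

lemma card_proper_eq_sum (m : ℕ) [NeZero m] :
    Nat.card {f : ZMod m → Fin q // IsProperColoring m q f}
      = ∑ e ∈ m.divisors,
          Nat.card {g : ZMod e → Fin q // IsProperColoring e q g ∧ IsAperiodic e q g} := by
  rw [Nat.card_congr (eqvSigma m)]
  rw [nat_card_sigma]
  rw [Finset.univ_eq_attach]
  rw [← Finset.sum_attach m.divisors
    (fun e => Nat.card {g : ZMod e → Fin q // IsProperColoring e q g ∧ IsAperiodic e q g})]
  refine Finset.sum_congr rfl fun e _ => ?_
  have : NeZero e.1 := ⟨(Nat.pos_of_mem_divisors e.2).ne'⟩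
  exact Nat.card_congr (eqvMinPer (Nat.mem_divisors.1 e.2).1)

end AperiodicAux

namespace AperiodicAux
variable {q : ℕ}

def AdjWord (m : ℕ) (w : Fin (m + 1) → Fin q) : Prop :=
  ∀ i : Fin m, w i.castSucc ≠ w i.succ

lemma card_ne (a : Fin q) : Nat.card {x : Fin q // x ≠ a} = q - 1 := by
  classical
  rw [Nat.card_eq_fintype_card, Fintype.card_subtype_compl (· = a),
    Fintype.card_subtype_eq, Fintype.card_fin]

lemma card_adjWord (m : ℕ) :
    Nat.card {w : Fin (m + 1) → Fin q // AdjWord m w} = q * (q - 1) ^ m := by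
  induction m with
  | zero =>
    have e1 : {w : Fin 1 → Fin q // AdjWord 0 w} ≃ (Fin 1 → Fin q) :=
      Equiv.subtypeUnivEquiv (fun w i => i.elim0)
    rw [Nat.card_congr e1]
    simp [Nat.card_eq_fintype_card]
  | succ m ih =>
    classical
    set W := {w : Fin (m + 1) → Fin q // AdjWord m w}
    have Φbij : Function.Bijective
        (fun p : (Σ w : W, {x : Fin q // x ≠ w.1 (Fin.last m)}) =>
          (⟨Fin.snoc p.1.1 p.2.1, by
            intro i
            refine Fin.lastCases ?_ ?_ i
            · rw [Fin.succ_last, Fin.snoc_last, Fin.snoc_castSucc]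
              exact fun hh => p.2.2 hh.symm
            · intro j
              rw [Fin.succ_castSucc, Fin.snoc_castSucc, Fin.snoc_castSucc]
              exact p.1.2 j⟩ : {w : Fin (m + 2) → Fin q // AdjWord (m + 1) w})) := by
      constructor
      · rintro ⟨⟨w1, h1⟩, x1, hx1⟩ ⟨⟨w2, h2⟩, x2, hx2⟩ hyp
        simp only [Subtype.mk.injEq] at hyp
        have hw : w1 = w2 := by
          funext j
          have := congrFun (Subtype.mk.inj hyp) j.castSucc
          rwa [Fin.snoc_castSucc, Fin.snoc_castSucc] at this
        subst hw
        have hx : x1 = x2 := by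
          have := congrFun (Subtype.mk.inj hyp) (Fin.last (m + 1))
          rwa [Fin.snoc_last, Fin.snoc_last] at this
        subst hx
        rfl
      · rintro ⟨w, hw⟩
        refine ⟨⟨⟨Fin.init w, fun j => ?_⟩, ⟨w (Fin.last (m + 1)), fun hh => ?_⟩⟩, ?_⟩
        · show w _ ≠ w _
          have := hw j.castSucc
          rwa [Fin.succ_castSucc] at this
        · have := hw (Fin.last m)
          rw [Fin.succ_last] at this
          exact this (show w _ = w _ from hh.symm)
        · exact Subtype.ext (Fin.snoc_init_self w)
    rw [← Nat.card_congr (Equiv.ofBijective _ Φbij)]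
    rw [nat_card_sigma]
    have : ∀ w : W, Nat.card {x : Fin q // x ≠ w.1 (Fin.last m)} = q - 1 :=
      fun w => card_ne _
    rw [Finset.sum_congr rfl (fun w _ => this w), Finset.sum_const, Finset.card_univ,
      smul_eq_mul, ← Nat.card_eq_fintype_card, ih]
    ring

noncomputable def eqvCycleWordNe (k : ℕ) :
    {f : ZMod (k + 1) → Fin q // IsProperColoring (k + 1) q f} ≃
    {w : Fin (k + 1) → Fin q // AdjWord k w ∧ w (Fin.last k) ≠ w 0} := by
  refine Equiv.ofBijective (fun f =>
    ⟨fun j => f.1 ((j.val : ℕ) : ZMod (k + 1)), ?_, ?_⟩) ⟨?_, ?_⟩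
  · intro i
    show f.1 _ ≠ f.1 _
    have := f.2 ((i.val : ℕ) : ZMod (k + 1))
    simpa [Fin.coe_castSucc, Fin.val_succ, Nat.cast_add, Nat.cast_one] using this
  · show f.1 _ ≠ f.1 _
    have := f.2 ((k : ℕ) : ZMod (k + 1))
    have h2 : ((k : ℕ) : ZMod (k + 1)) + 1 = (((0 : Fin (k+1)).val : ℕ) : ZMod (k + 1)) := by
      push_cast
      rw [show ((k : ZMod (k+1)) + 1) = ((k+1 : ℕ) : ZMod (k+1)) by push_cast; ring]
      simp [ZMod.natCast_self]
    rw [h2] at this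
    simpa [Fin.val_last] using this
  · intro f g hyp
    refine Subtype.ext (funext fun i => ?_)
    have := congrFun (congrArg Subtype.val hyp) ⟨i.val, ZMod.val_lt i⟩
    simpa [ZMod.natCast_zmod_val] using this
  · rintro ⟨w, hadj, hne⟩
    have hproper : IsProperColoring (k + 1) q
        (fun i : ZMod (k+1) => w ⟨i.val, ZMod.val_lt i⟩) := by
      intro i
      show w ⟨i.val, ZMod.val_lt i⟩ ≠ w ⟨(i+1).val, ZMod.val_lt (i+1)⟩
      rcases eq_or_lt_of_le (Nat.lt_succ_iff.mp (ZMod.val_lt i)) with hik | hik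
      · have h1 : i + 1 = 0 := by
          rw [← ZMod.natCast_zmod_val i, hik,
            show ((k : ZMod (k+1)) + 1) = ((k+1 : ℕ) : ZMod (k+1)) by push_cast; ring,
            ZMod.natCast_self]
        rw [show (⟨i.val, ZMod.val_lt i⟩ : Fin (k+1)) = Fin.last k from Fin.ext (by simpa using hik),
          show (⟨(i+1).val, ZMod.val_lt (i+1)⟩ : Fin (k+1)) = 0 from Fin.ext (by simp [h1])]
        exact hne
      · have h1 : (i + 1).val = i.val + 1 := by
          rw [← ZMod.natCast_zmod_val i, show ((i.val : ZMod (k+1)) + 1)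
            = ((i.val + 1 : ℕ) : ZMod (k+1)) by push_cast; ring]
          rw [ZMod.val_natCast, ZMod.val_natCast]
          rw [Nat.mod_eq_of_lt (by omega), Nat.mod_eq_of_lt (by omega)]
        rw [show (⟨i.val, ZMod.val_lt i⟩ : Fin (k+1)) = Fin.castSucc ⟨i.val, hik⟩ from
            Fin.ext (by simp),
          show (⟨(i+1).val, ZMod.val_lt (i+1)⟩ : Fin (k+1)) = Fin.succ ⟨i.val, hik⟩ from
            Fin.ext (by simp [h1])]
        exact hadj ⟨i.val, hik⟩
    refine ⟨⟨fun i => w ⟨i.val, ZMod.val_lt i⟩, hproper⟩, ?_⟩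
    refine Subtype.ext (funext fun j => ?_)
    show w ⟨((j.val : ℕ) : ZMod (k+1)).val, _⟩ = w j
    congr 1
    apply Fin.ext
    simp [ZMod.val_natCast, Nat.mod_eq_of_lt j.isLt]

noncomputable def eqvCycleWordEq (k : ℕ) [NeZero k] :
    {f : ZMod k → Fin q // IsProperColoring k q f} ≃
    {w : Fin (k + 1) → Fin q // AdjWord k w ∧ w (Fin.last k) = w 0} := by
  have hk : 0 < k := Nat.pos_of_ne_zero (NeZero.ne k)
  have hlt : ∀ i : ZMod k, i.val < k + 1 := fun i => (ZMod.val_lt i).trans (Nat.lt_succ_self k)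
  refine Equiv.ofBijective (fun f =>
    ⟨fun j => f.1 ((j.val : ℕ) : ZMod k), ?_, ?_⟩) ⟨?_, ?_⟩
  · intro i
    show f.1 _ ≠ f.1 _
    have := f.2 ((i.val : ℕ) : ZMod k)
    simpa [Fin.coe_castSucc, Fin.val_succ, Nat.cast_add, Nat.cast_one] using this
  · show f.1 _ = f.1 _
    simp [Fin.val_last, ZMod.natCast_self]
  · intro f g hyp
    refine Subtype.ext (funext fun i => ?_)
    have := congrFun (congrArg Subtype.val hyp) ⟨i.val, hlt i⟩
    simpa [ZMod.natCast_zmod_val] using this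
  · rintro ⟨w, hadj, heq⟩
    have hproper : IsProperColoring k q
        (fun i : ZMod k => w ⟨i.val, hlt i⟩) := by
      intro i
      show w ⟨i.val, hlt i⟩ ≠ w ⟨(i+1).val, hlt (i+1)⟩
      have hvlt : i.val < k := ZMod.val_lt i
      rcases eq_or_lt_of_le (Nat.succ_le_of_lt hvlt) with hik | hik
      · have hik' : i.val + 1 = k := hik
        have h1 : i + 1 = 0 := by
          rw [← ZMod.natCast_zmod_val i, show ((i.val : ZMod k) + 1)
            = ((i.val + 1 : ℕ) : ZMod k) by push_cast; ring, hik', ZMod.natCast_self]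
        rw [show (⟨(i+1).val, hlt (i+1)⟩ : Fin (k+1)) = 0 from Fin.ext (by simp [h1]),
          ← heq,
          show (⟨i.val, hlt i⟩ : Fin (k+1)) = Fin.castSucc ⟨i.val, hvlt⟩ from Fin.ext (by simp),
          show Fin.last k = Fin.succ ⟨i.val, hvlt⟩ from Fin.ext (by simp [Fin.val_succ, hik'])]
        exact hadj ⟨i.val, hvlt⟩
      · have h1 : (i + 1).val = i.val + 1 := by
          rw [← ZMod.natCast_zmod_val i, show ((i.val : ZMod k) + 1)
            = ((i.val + 1 : ℕ) : ZMod k) by push_cast; ring]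
          rw [ZMod.val_natCast, ZMod.val_natCast]
          rw [Nat.mod_eq_of_lt (by omega), Nat.mod_eq_of_lt (by omega)]
        rw [show (⟨i.val, hlt i⟩ : Fin (k+1)) = Fin.castSucc ⟨i.val, hvlt⟩ from
            Fin.ext (by simp),
          show (⟨(i+1).val, hlt (i+1)⟩ : Fin (k+1)) = Fin.succ ⟨i.val, hvlt⟩ from
            Fin.ext (by simp [h1])]
        exact hadj ⟨i.val, hvlt⟩
    refine ⟨⟨fun i => w ⟨i.val, hlt i⟩, hproper⟩, ?_⟩
    refine Subtype.ext (funext fun j => ?_)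
    show w ⟨((j.val : ℕ) : ZMod k).val, _⟩ = w j
    rcases eq_or_lt_of_le (Nat.lt_succ_iff.mp j.isLt) with hj | hj
    · rw [show (⟨((j.val : ℕ) : ZMod k).val, _⟩ : Fin (k+1)) = 0 from
        Fin.ext (by simp [ZMod.val_natCast, hj]), ← heq]
      congr 1
      exact Fin.ext (by simpa using hj.symm)
    · congr 1
      apply Fin.ext
      simp [ZMod.val_natCast, Nat.mod_eq_of_lt hj]

lemma nat_card_split {α : Type*} [Finite α] (A C : α → Prop) :
    Nat.card {x // A x ∧ C x} + Nat.card {x // A x ∧ ¬ C x} = Nat.card {x // A x} := by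
  classical
  rw [← Nat.card_sum]
  refine Nat.card_congr ?_
  exact (Equiv.sumCongr (Equiv.subtypeSubtypeEquivSubtypeInter A C).symm
    (Equiv.subtypeSubtypeEquivSubtypeInter A (fun x => ¬ C x)).symm).trans
    (Equiv.sumCompl (fun x : {w // A w} => C x.1))

lemma card_proper_rec (k : ℕ) [NeZero k] :
    Nat.card {f : ZMod (k + 1) → Fin q // IsProperColoring (k + 1) q f}
      + Nat.card {f : ZMod k → Fin q // IsProperColoring k q f} = q * (q - 1) ^ k := by
  rw [Nat.card_congr (eqvCycleWordNe k), Nat.card_congr (eqvCycleWordEq k)]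
  rw [← card_adjWord (q := q) k]
  have := nat_card_split (α := Fin (k+1) → Fin q) (AdjWord k)
    (fun w => w (Fin.last k) = w 0)
  rw [← this]
  ring

lemma card_proper_one :
    Nat.card {f : ZMod 1 → Fin q // IsProperColoring 1 q f} = 0 := by
  have : IsEmpty {f : ZMod 1 → Fin q // IsProperColoring 1 q f} := by
    refine ⟨fun f => ?_⟩
    exact f.2 0 (congrArg f.1 (Subsingleton.elim _ _))
  exact Nat.card_of_isEmpty

lemma card_proper_formula (hq : 1 ≤ q) :
    ∀ m : ℕ, 1 ≤ m →
      (Nat.card {f : ZMod m → Fin q // IsProperColoring m q f} : ℤ)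
        = ((q : ℤ) - 1) ^ m + (-1) ^ m * ((q : ℤ) - 1) := by
  refine Nat.le_induction ?_ ?_
  · rw [card_proper_one]
    push_cast
    ring
  · intro m hm ih
    have : NeZero m := ⟨by omega⟩
    have hrec := card_proper_rec (q := q) m
    have := congrArg (fun x : ℕ => (x : ℤ)) hrec
    push_cast [Nat.cast_sub hq] at this
    rw [ih] at this
    have hgoal : (Nat.card {f : ZMod (m+1) → Fin q // IsProperColoring (m+1) q f} : ℤ)
        = (q : ℤ) * ((q:ℤ) - 1) ^ m - (((q:ℤ) - 1) ^ m + (-1) ^ m * ((q:ℤ) - 1)) := by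
      linarith
    rw [hgoal]
    ring

lemma sum_moebius_eq_zero {n : ℕ} (h0 : n ≠ 0) (h1 : n ≠ 1) :
    ∑ j ∈ n.divisors, (ArithmeticFunction.moebius j : ℤ) = 0 := by
  classical
  have h := ArithmeticFunction.moebius_mul_coe_zeta
  have h2 := congrArg (fun f : ArithmeticFunction ℤ => f n) h
  simp only [ArithmeticFunction.mul_apply] at h2
  rw [ArithmeticFunction.one_apply_ne h1] at h2
  rw [Nat.sum_divisorsAntidiagonal
    (fun i j => (ArithmeticFunction.moebius i : ℤ) *
      (((ArithmeticFunction.zeta : ArithmeticFunction ℕ) : ArithmeticFunction ℤ) j))] at h2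
  rw [← h2]
  refine Finset.sum_congr rfl fun i hi => ?_
  obtain ⟨hdvd, hn0⟩ := Nat.mem_divisors.1 hi
  have hne : n / i ≠ 0 := fun h =>
    hn0 (by rw [← Nat.div_mul_cancel hdvd, h, zero_mul])
  rw [ArithmeticFunction.natCoe_apply, ArithmeticFunction.zeta_apply_ne hne]
  simp


open ArithmeticFunction in
lemma key_vanish {n : ℕ} (hn : 3 ≤ n) :
    ∑ j ∈ n.divisors, (moebius j : ℤ) * (-1) ^ (n / j) = 0 := by
  classical
  have hn0 : n ≠ 0 := by omega
  have hsum0 : ∑ j ∈ n.divisors, (moebius j : ℤ) = 0 :=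
    sum_moebius_eq_zero hn0 (by omega)
  rcases Nat.even_or_odd n with he | ho
  · obtain ⟨t, ht⟩ := he
    have ht2 : n = 2 * t := by omega
    have htn : t ∣ n := ⟨2, by omega⟩
    have ht1 : t ≠ 1 := by omega
    have ht0 : t ≠ 0 := by omega
    have step1 : ∑ j ∈ n.divisors, (moebius j : ℤ) * (-1) ^ (n / j)
        = ∑ j ∈ n.divisors, ((moebius j : ℤ) * ((-1) ^ (n / j) + 1))
          - ∑ j ∈ n.divisors, (moebius j : ℤ) := by
      rw [← Finset.sum_sub_distrib]
      refine Finset.sum_congr rfl fun j hj => by ring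
    rw [step1, hsum0, sub_zero]
    have step2 : ∀ j ∈ n.divisors,
        (moebius j : ℤ) * ((-1) ^ (n / j) + 1)
          = if j ∣ t then 2 * (moebius j : ℤ) else 0 := by
      intro j hj
      obtain ⟨hdvd, _⟩ := Nat.mem_divisors.1 hj
      have hj0 : j ≠ 0 := fun h => hn0 (by simpa [h] using hdvd)
      by_cases hjt : j ∣ t
      · rw [if_pos hjt]
        obtain ⟨c, hc⟩ := hjt
        have hj' : n / j * j = n := Nat.div_mul_cancel hdvd
        have hval : n / j = 2 * c := Nat.eq_of_mul_eq_mul_right (Nat.pos_of_ne_zero hj0)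
          (by rw [hj', ht2, hc]; ring)
        have hev : Even (n / j) := ⟨c, by omega⟩
        rw [hev.neg_one_pow]
        ring
      · rw [if_neg hjt]
        have hodd : ¬ Even (n / j) := by
          intro hev
          obtain ⟨c, hc⟩ := hev
          apply hjt
          have h1 : j * (n / j) = n := Nat.mul_div_cancel' hdvd
          have h2 : 2 * t = 2 * (j * c) := by rw [← ht2, ← h1, hc]; ring
          exact ⟨c, Nat.eq_of_mul_eq_mul_left (by omega) h2⟩
        rw [(Nat.not_even_iff_odd.1 hodd).neg_one_pow]
        ring
    rw [Finset.sum_congr rfl step2]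
    rw [Finset.sum_ite, Finset.sum_const_zero, add_zero]
    have hfil : Finset.filter (fun j => j ∣ t) n.divisors = t.divisors :=
      Nat.divisors_filter_dvd_of_dvd hn0 htn
    rw [hfil, ← Finset.mul_sum, sum_moebius_eq_zero ht0 ht1, mul_zero]
  · have hterm : ∀ j ∈ n.divisors, (moebius j : ℤ) * (-1) ^ (n / j) = - (moebius j : ℤ) := by
      intro j hj
      obtain ⟨hdvd, _⟩ := Nat.mem_divisors.1 hj
      have hodd : Odd (n / j) := ho.of_dvd_nat (Nat.div_dvd_of_dvd hdvd)
      rw [hodd.neg_one_pow]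
      ring
    rw [Finset.sum_congr rfl hterm, Finset.sum_neg_distrib, hsum0, neg_zero]

open ArithmeticFunction in
lemma aperiodic_count (q n : ℕ) (hq : 2 ≤ q) (hn : 3 ≤ n) :
    (Nat.card {f : ZMod n → Fin q // IsProperColoring n q f ∧ IsAperiodic n q f} : ℤ)
      = ∑ j ∈ n.divisors, (moebius j : ℤ) * ((q : ℤ) - 1) ^ (n / j) := by
  classical
  have hPA : ∀ m > 0, ∑ e ∈ m.divisors,
      (Nat.card {g : ZMod e → Fin q // IsProperColoring e q g ∧ IsAperiodic e q g} : ℤ)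
      = (Nat.card {f : ZMod m → Fin q // IsProperColoring m q f} : ℤ) := by
    intro m hm
    have : NeZero m := ⟨hm.ne'⟩
    rw [card_proper_eq_sum m, Nat.cast_sum]
  have hinv := (ArithmeticFunction.sum_eq_iff_sum_smul_moebius_eq
    (f := fun e => (Nat.card {g : ZMod e → Fin q //
        IsProperColoring e q g ∧ IsAperiodic e q g} : ℤ))
    (g := fun m => (Nat.card {f : ZMod m → Fin q //
        IsProperColoring m q f} : ℤ))).1 hPA n (by omega)
  rw [Nat.sum_divisorsAntidiagonal (fun i j => (moebius i) •
    (Nat.card {f : ZMod j → Fin q // IsProperColoring j q f} : ℤ))] at hinv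
  rw [← hinv]
  have hterm : ∀ j ∈ n.divisors, (moebius j) •
      (Nat.card {f : ZMod (n / j) → Fin q // IsProperColoring (n / j) q f} : ℤ)
      = (moebius j : ℤ) * ((q:ℤ)-1)^(n/j)
        + ((q:ℤ)-1) * ((moebius j : ℤ) * (-1)^(n/j)) := by
    intro j hj
    obtain ⟨hdvd, hn0⟩ := Nat.mem_divisors.1 hj
    have hj0 : 0 < j := Nat.pos_of_mem_divisors hj
    have hpos : 1 ≤ n / j := Nat.div_pos (Nat.le_of_dvd (by omega) hdvd) hj0
    rw [zsmul_eq_mul, card_proper_formula (by omega) _ hpos]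
    simp only [Int.cast_id]
    ring
  rw [Finset.sum_congr rfl hterm, Finset.sum_add_distrib, ← Finset.mul_sum,
    key_vanish hn, mul_zero, add_zero]

lemma rot_mem {n q : ℕ} {f : ZMod n → Fin q}
    (hf : IsProperColoring n q f ∧ IsAperiodic n q f) (s : ZMod n) :
    IsProperColoring n q (fun i => f (i + s)) ∧ IsAperiodic n q (fun i => f (i + s)) := by
  constructor
  · intro i
    have := hf.1 (i + s)
    have h1 : i + 1 + s = i + s + 1 := by ring
    simpa [h1] using this
  · intro t ht
    refine hf.2 t fun i => ?_
    have := ht (i - s)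
    have h1 : i - s + t + s = i + t := by ring
    have h2 : i - s + s = i := by ring
    simpa [h1, h2] using this

lemma card_eq_card_quot_mul (q n : ℕ) [NeZero n] :
    Nat.card {f : ZMod n → Fin q // IsProperColoring n q f ∧ IsAperiodic n q f}
      = Nat.card (Quot (fun a b :
          {f : ZMod n → Fin q // IsProperColoring n q f ∧ IsAperiodic n q f} =>
            RotEquiv n q a.1 b.1)) * n := by
  classical
  set X := {f : ZMod n → Fin q // IsProperColoring n q f ∧ IsAperiodic n q f} with hX
  set R : X → X → Prop := fun a b => RotEquiv n q a.1 b.1 with hR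
  have hequiv : Equivalence R := by
    constructor
    · intro a; exact ⟨0, fun i => by rw [add_zero]⟩
    · rintro a b ⟨s, hs⟩
      refine ⟨-s, fun i => ?_⟩
      have := hs (i - s)
      have h1 : i - s + s = i := by ring
      have h2 : i + -s = i - s := by ring
      rw [h1] at this
      rw [h2, ← this]
    · rintro a b c ⟨s, hs⟩ ⟨t, ht⟩
      refine ⟨t + s, fun i => ?_⟩
      have h1 : i + (t + s) = (i + t) + s := by ring
      rw [h1, hs (i + t), ht i]
  have hbij : Function.Bijective (fun p : Quot R × ZMod n =>
      (⟨fun i => (Quot.out p.1).1 (i + p.2), rot_mem (Quot.out p.1).2 p.2⟩ : X)) := by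
    constructor
    · rintro ⟨c, s⟩ ⟨c', s'⟩ hyp
      simp only [Subtype.mk.injEq] at hyp
      have hcc : R (Quot.out c) (Quot.out c') := by
        refine ⟨s - s', fun i => ?_⟩
        have h1 : i + (s - s') = (i - s') + s := by ring
        have := congrFun hyp (i - s')
        have h2 : i - s' + s' = i := by ring
        rw [h2] at this
        rw [h1, this]
      have hc : c = c' := by
        rw [← Quot.out_eq c, ← Quot.out_eq c']
        exact Quot.sound hcc
      subst hc
      have hss : s = s' := by
        have hap := (Quot.out c).2.2
        have key : ∀ j, (Quot.out c).1 (j + (s - s')) = (Quot.out c).1 j := by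
          intro j
          have h1 : j + (s - s') = (j - s') + s := by ring
          have := congrFun hyp (j - s')
          have h2 : j - s' + s' = j := by ring
          rw [h2] at this
          rw [h1, this]
        exact sub_eq_zero.1 (hap (s - s') key)
      rw [hss]
    · intro f
      have hrel : R (Quot.out (Quot.mk R f)) f := by
        have h1 : Quot.mk R (Quot.out (Quot.mk R f)) = Quot.mk R f := Quot.out_eq _
        exact hequiv.eqvGen_iff.1 (Quot.eqvGen_exact h1)
      obtain ⟨s, hs⟩ := hrel
      exact ⟨⟨Quot.mk R f, s⟩, Subtype.ext (funext fun i => hs i)⟩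
  rw [Nat.card_congr (Equiv.ofBijective _ hbij).symm, Nat.card_prod, Nat.card_zmod]

end AperiodicAux

open ArithmeticFunction in
/-- For `q ≥ 2` and `n ≥ 3`, the number of aperiodic proper
`q`-colorings of the cycle `C_n` equals `∑_{j ∣ n} μ(j)(q−1)^(n/j)`;
equivalently, `n` times the number of rotation classes of such colorings
equals this sum. -/
theorem aperiodic_proper_colorings_count (q n : ℕ) (hq : 2 ≤ q) (hn : 3 ≤ n) :
    (Nat.card {f : ZMod n → Fin q // IsProperColoring n q f ∧ IsAperiodic n q f} : ℤ)
        = ∑ j ∈ n.divisors, (moebius j : ℤ) * ((q : ℤ) - 1) ^ (n / j) ∧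
    (n : ℤ) * (Nat.card (Quot (fun a b :
        {f : ZMod n → Fin q // IsProperColoring n q f ∧ IsAperiodic n q f} =>
          RotEquiv n q a.1 b.1)) : ℤ)
        = ∑ j ∈ n.divisors, (moebius j : ℤ) * ((q : ℤ) - 1) ^ (n / j) := by
  have hnz : NeZero n := ⟨by omega⟩
  have h1 := AperiodicAux.aperiodic_count q n hq hn
  refine ⟨h1, ?_⟩
  rw [← h1, AperiodicAux.card_eq_card_quot_mul q n]
  push_cast
  ring
end
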